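/- arXiv:1502.00941 — 10 statements merged into one kernel-verified Lean document; each statement's English description precedes it below -/
import Mathlib

section
/- Let n ≥ 1 and let w_1,…,w_n be nonzero complex numbers such that ∏_{j∈S} w_j ≠ 1 for every nonempty subset S ⊆ {1,…,n}. Then ∑_{σ∈S_n} sgn(σ) ∏_{j=1}^n ((1−w_{σ(j)})/w_{σ(j)})^j · [(1−w_{σ(1)})(1−w_{σ(1)}w_{σ(2)})⋯(1−w_{σ(1)}⋯w_{σ(n)})]^{−1} = (−1)^{n(n−1)/2} (∏_{j=1}^n w_j^{−n}) · det(w_j^{i−1})_{1≤i,j≤n}. -/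
open scoped BigOperators

open Finset Equiv


lemma tw_prod_Iic_rev {n : ℕ} (g : Fin n → ℂ) (k : Fin n) :
    ∏ j ∈ Finset.Iic k, g (Fin.rev j) = ∏ j ∈ Finset.Ici (Fin.rev k), g j := by
  refine Finset.prod_nbij' (fun j => Fin.rev j) (fun j => Fin.rev j) ?_ ?_ ?_ ?_ ?_ <;>
    simp only [Finset.mem_Iic, Finset.mem_Ici, Fin.rev_rev, implies_true, forall_const]
  · intro a ha; exact Fin.rev_le_rev.mpr ha
  · intro a ha; rw [← Fin.rev_le_rev, Fin.rev_rev] at ha; exact ha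

lemma tw_Ici_succ {n : ℕ} (k : Fin n) :
    Finset.Ici k.succ = (Finset.Ici k).map ⟨Fin.succ, Fin.succ_injective n⟩ := by
  ext j
  simp only [Finset.mem_Ici, Finset.mem_map, Function.Embedding.coeFn_mk]
  constructor
  · intro hj
    cases j using Fin.cases with
    | zero =>
        exact absurd (Fin.le_zero_iff.mp hj) (Fin.succ_ne_zero k)
    | succ i => exact ⟨i, Fin.succ_le_succ_iff.mp hj, rfl⟩
  · rintro ⟨i, hi, rfl⟩; exact Fin.succ_le_succ_iff.mpr hi

lemma tw_Ici_zero {n : ℕ} : (Finset.Ici (0 : Fin (n+1))) = Finset.univ := by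
  ext j; simp [Finset.mem_Ici, Fin.zero_le]

def twF {n : ℕ} (p : Fin (n+1)) (e : Perm (Fin n)) : Perm (Fin (n+1)) :=
  p.cycleRange.symm * Equiv.Perm.decomposeFin.symm (0, e)

@[simp] lemma twF_zero {n : ℕ} (p : Fin (n+1)) (e : Perm (Fin n)) : twF p e 0 = p := by
  simp [twF, Perm.mul_apply]

@[simp] lemma twF_succ {n : ℕ} (p : Fin (n+1)) (e : Perm (Fin n)) (i : Fin n) :
    twF p e i.succ = p.succAbove (e i) := by
  simp [twF, Perm.mul_apply, Equiv.swap_self]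

lemma twF_sign {n : ℕ} (p : Fin (n+1)) (e : Perm (Fin n)) :
    Perm.sign (twF p e) = (-1) ^ (p : ℕ) * Perm.sign e := by
  simp [twF, Equiv.Perm.decomposeFin.symm_sign]

lemma twF_bijective {n : ℕ} :
    Function.Bijective (fun pe : Fin (n+1) × Perm (Fin n) => twF pe.1 pe.2) := by
  rw [Fintype.bijective_iff_injective_and_card]
  constructor
  · rintro ⟨p, e⟩ ⟨q, f⟩ h
    simp only at h
    have hp : p = q := by
      have := congrArg (fun σ : Perm (Fin (n+1)) => σ 0) h
      simpa using this
    subst hp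
    have he : e = f := by
      apply Equiv.ext fun i => ?_
      have := congrArg (fun σ : Perm (Fin (n+1)) => σ i.succ) h
      simp only [twF_succ] at this
      exact Fin.succAbove_right_injective this
    simp [he]
  · simp [Fintype.card_perm, Nat.factorial_succ]

lemma tw_sign_revPerm : ∀ n : ℕ, Perm.sign (Fin.revPerm : Perm (Fin n)) = (-1) ^ (n * (n-1) / 2)
  | 0 => by
      have : (Fin.revPerm : Perm (Fin 0)) = 1 := Subsingleton.elim _ _
      simp [this]
  | (n+1) => by
      have h : (Fin.revPerm : Perm (Fin (n+1)))
          = (finRotate (n+1))⁻¹ * Equiv.Perm.decomposeFin.symm (0, (Fin.revPerm : Perm (Fin n))) := by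
        apply Equiv.ext fun i => ?_
        cases i using Fin.cases with
        | zero =>
            simp only [Perm.mul_apply, Equiv.Perm.decomposeFin_symm_apply_zero,
              Fin.revPerm_apply, Fin.rev_zero]
            exact Equiv.Perm.eq_inv_iff_eq.mpr finRotate_last
        | succ i =>
            simp only [Perm.mul_apply, Equiv.Perm.decomposeFin_symm_apply_succ,
              Equiv.swap_self, Equiv.refl_apply, Fin.revPerm_apply, Fin.rev_succ]
            exact Equiv.Perm.eq_inv_iff_eq.mpr
              (by rw [finRotate_succ_apply, Fin.coeSucc_eq_succ])
      have hexp : n + n * (n-1) / 2 = (n+1) * ((n+1)-1) / 2 := by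
        rw [← Nat.choose_two_right, show (n+1)*((n+1)-1)/2 = (n+1)*n/2 by simp,
          show (n+1)*n/2 = (n+1)*((n+1)-1)/2 by simp, ← Nat.choose_two_right,
          Nat.choose_succ_succ, Nat.choose_one_right]
      have hinv : ((-1 : ℤˣ) ^ (n + 1 - 1))⁻¹ = (-1) ^ n := by
        rw [Nat.add_sub_cancel, ← inv_pow]; norm_num
      rw [h, map_mul, map_inv, sign_finRotate, Equiv.Perm.decomposeFin.symm_sign,
        if_pos rfl, one_mul, tw_sign_revPerm n, hinv, ← pow_add, hexp]

lemma tw_det_updateRow_sum {m : ℕ} (A : Matrix (Fin m) (Fin m) ℂ) (r : Fin m)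
    {ι : Type*} [DecidableEq ι] (s : Finset ι) (f : ι → (Fin m → ℂ)) :
    (A.updateRow r (∑ i ∈ s, f i)).det = ∑ i ∈ s, (A.updateRow r (f i)).det := by
  induction s using Finset.induction_on with
  | empty =>
      simp only [Finset.sum_empty]
      exact Matrix.det_eq_zero_of_row_eq_zero r (fun j => by simp)
  | insert a s hx ih =>
      rw [Finset.sum_insert hx, Matrix.det_updateRow_add, ih, Finset.sum_insert hx]

lemma tw_det_rot (n : ℕ) (w : Fin (n+1) → ℂ) :
    ((Matrix.of fun i j : Fin (n+1) => w j ^ (i:ℕ)).updateRow 0 (fun j => w j ^ (n+1))).det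
      = (-1:ℂ)^n * (∏ j, w j) * (Matrix.of fun i j : Fin (n+1) => w j ^ (i:ℕ)).det := by
  set M0 : Matrix (Fin (n+1)) (Fin (n+1)) ℂ := Matrix.of fun i j => w j ^ (i:ℕ) with hM0
  set U : Matrix (Fin (n+1)) (Fin (n+1)) ℂ := M0.updateRow 0 (fun j => w j ^ (n+1)) with hU
  have h1 : (Matrix.of fun i j : Fin (n+1) => w j ^ ((i:ℕ)+1))
      = U.submatrix (finRotate (n+1)) id := by
    ext i j
    cases i using Fin.lastCases with
    | last =>
        simp [hU, Matrix.submatrix_apply, finRotate_last, Matrix.updateRow_self, Fin.val_last]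
    | cast i =>
        have h0 : finRotate (n+1) i.castSucc = i.succ := by
          rw [finRotate_succ_apply, Fin.coeSucc_eq_succ]
        simp [hU, Matrix.submatrix_apply, h0, Matrix.updateRow_ne (Fin.succ_ne_zero i), hM0,
          Fin.val_succ, Fin.coe_castSucc]
  have h2 : (Matrix.of fun i j : Fin (n+1) => w j ^ ((i:ℕ)+1)).det = (∏ j, w j) * M0.det := by
    have he : (Matrix.of fun i j : Fin (n+1) => w j ^ ((i:ℕ)+1))
        = Matrix.of fun i j => w j * M0 i j := by
      ext i j; simp [hM0, pow_succ']
    rw [he, Matrix.det_mul_row]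
  have h3 := Matrix.det_permute (finRotate (n+1)) U
  rw [← h1, h2, sign_finRotate] at h3
  have hs : ((-1:ℂ)^n) * ((-1:ℂ)^n) = 1 := by
    rw [← pow_add, ← two_mul, pow_mul]; norm_num
  have h3' : (∏ j, w j) * M0.det = (-1:ℂ)^n * U.det := by
    rw [h3]; norm_num
  calc U.det = ((-1:ℂ)^n * (-1:ℂ)^n) * U.det := by rw [hs, one_mul]
    _ = (-1:ℂ)^n * ((∏ j, w j) * M0.det) := by rw [mul_assoc, ← h3']
    _ = (-1:ℂ)^n * (∏ j, w j) * M0.det := by ring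

lemma tw_det_N (n : ℕ) (w : Fin (n+1) → ℂ) :
    ((Matrix.of fun i j : Fin (n+1) => w j ^ (i:ℕ)).updateRow 0 (fun j => (1 - w j)^(n+1))).det
      = (1 - ∏ j, w j) * (Matrix.of fun i j : Fin (n+1) => w j ^ (i:ℕ)).det := by
  set M0 : Matrix (Fin (n+1)) (Fin (n+1)) ℂ := Matrix.of fun i j => w j ^ (i:ℕ) with hM0
  have hrow : (fun j : Fin (n+1) => (1 - w j)^(n+1))
      = ∑ k ∈ Finset.range (n+2),
          ((-1:ℂ)^(n+1-k) * ((n+1).choose k : ℂ)) • (fun j : Fin (n+1) => w j ^ (n+1-k)) := by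
    funext j
    rw [Finset.sum_apply]
    have hb := add_pow (1:ℂ) (-(w j)) (n+1)
    simp only [one_pow, one_mul] at hb
    rw [sub_eq_add_neg, hb]
    refine Finset.sum_congr rfl fun k hk => ?_
    rw [neg_pow]
    simp only [Pi.smul_apply, smul_eq_mul]
    ring
  rw [hrow, tw_det_updateRow_sum]
  have hterm : ∀ k ∈ Finset.range (n+2),
      (M0.updateRow 0 (((-1:ℂ)^(n+1-k) * ((n+1).choose k : ℂ)) •
          (fun j : Fin (n+1) => w j ^ (n+1-k)))).det
        = (if k = n+1 then M0.det else 0) +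
          (if k = 0 then (-(∏ j, w j)) * M0.det else 0) := by
    intro k hk
    rw [Matrix.det_updateRow_smul]
    rcases eq_or_ne k (n+1) with rfl | hk1
    · have h0 : n + 1 - (n+1) = 0 := by omega
      rw [h0]
      have : (fun j : Fin (n+1) => w j ^ (0:ℕ)) = M0 0 := by
        funext j; simp [hM0]
      rw [this, Matrix.updateRow_eq_self]
      simp [Nat.choose_self]
    · rcases eq_or_ne k 0 with rfl | hk0
      · have h0 : n + 1 - 0 = n+1 := rfl
        rw [h0, tw_det_rot n w]
        simp only [Nat.choose_zero_right, Nat.cast_one, mul_one, if_neg (by omega : (0:ℕ) ≠ n+1),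
          if_pos rfl, zero_add]
        have hs : ((-1:ℂ)^(n+1)) * ((-1:ℂ)^n) = -1 := by
          rw [← pow_add]
          have : n + 1 + n = 2*n + 1 := by ring
          rw [this, pow_succ, pow_mul]
          norm_num
        calc (-1:ℂ)^(n+1) * (((-1:ℂ)^n * ∏ j, w j) *
                (Matrix.of fun i j : Fin (n+1) => w j ^ (i:ℕ)).det)
            = ((-1:ℂ)^(n+1) * (-1:ℂ)^n) * ((∏ j, w j) *
                (Matrix.of fun i j : Fin (n+1) => w j ^ (i:ℕ)).det) := by ring
          _ = _ := by rw [hs, if_pos trivial, hM0]; ring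
      · -- 1 ≤ k ≤ n : exponent m := n+1-k ∈ [1, n], repeated row
        have hm1 : 1 ≤ n + 1 - k := by simp at hk; omega
        have hm2 : n + 1 - k ≤ n := by omega
        have hz : (M0.updateRow 0 (fun j : Fin (n+1) => w j ^ (n+1-k))).det = 0 := by
          apply Matrix.det_zero_of_row_eq (i := (0 : Fin (n+1)))
            (j := (⟨n+1-k, by omega⟩ : Fin (n+1)))
          · exact fun h => by simp [Fin.ext_iff] at h; omega
          · funext j
            rw [Matrix.updateRow_self, Matrix.updateRow_ne (by simp [Fin.ext_iff]; omega)]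
            simp [hM0]
        rw [hz, mul_zero, if_neg hk1, if_neg hk0]
        simp
  rw [Finset.sum_congr rfl hterm, Finset.sum_add_distrib]
  rw [Finset.sum_ite_eq' (Finset.range (n+2)) (n+1), Finset.sum_ite_eq' (Finset.range (n+2)) 0]
  rw [if_pos (by simp), if_pos (by simp)]
  ring

lemma tw_key_det (n : ℕ) (w : Fin (n+1) → ℂ) :
    ∑ p : Fin (n+1), (-1:ℂ)^(p:ℕ) * (1 - w p)^(n+1) *
        (Matrix.of fun (i j : Fin n) => w (p.succAbove j) ^ ((i:ℕ)+1)).det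
      = (1 - ∏ j, w j) * (Matrix.of fun i j : Fin (n+1) => w j ^ (i:ℕ)).det := by
  set N : Matrix (Fin (n+1)) (Fin (n+1)) ℂ :=
    (Matrix.of fun i j : Fin (n+1) => w j ^ (i:ℕ)).updateRow 0 (fun j => (1 - w j)^(n+1)) with hN
  have h := Matrix.det_succ_row_zero N
  rw [tw_det_N] at h
  rw [h]
  refine Finset.sum_congr rfl fun p _ => ?_
  have e1 : N 0 p = (1 - w p)^(n+1) := by rw [hN, Matrix.updateRow_self]
  have e2 : N.submatrix Fin.succ p.succAbove
      = (Matrix.of fun (i j : Fin n) => w (p.succAbove j) ^ ((i:ℕ)+1)) := by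
    ext i j
    rw [Matrix.submatrix_apply, hN, Matrix.updateRow_ne (Fin.succ_ne_zero i)]
    simp [Fin.val_succ]
  rw [e1, e2]

lemma tw_keyB : ∀ (n : ℕ) (w : Fin n → ℂ), (∀ j, w j ≠ 0) →
    (∀ S : Finset (Fin n), S.Nonempty → (∏ j ∈ S, w j) ≠ 1) →
    (∑ σ : Perm (Fin n),
        ((Perm.sign σ : ℤ) : ℂ) *
          (∏ j : Fin n, ((1 - w (σ j)) / w (σ j)) ^ (n - (j : ℕ))) *
          (∏ k : Fin n, (1 - ∏ j ∈ Finset.Ici k, w (σ j)))⁻¹) =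
      (∏ j : Fin n, w j ^ n)⁻¹ * (Matrix.of fun i j : Fin n => w j ^ (i : ℕ)).det
  | 0 => by
      intro w _ _
      rw [Fintype.sum_subsingleton _ (1 : Perm (Fin 0))]
      simp [Matrix.det_fin_zero]
  | (n+1) => by
      intro w hw0 hS
      have IH := tw_keyB n
      have hW : (1:ℂ) - ∏ j, w j ≠ 0 :=
        sub_ne_zero.mpr (Ne.symm (hS Finset.univ Finset.univ_nonempty))
      have hsum := Fintype.sum_bijective _ (twF_bijective (n := n))
          (fun pe : Fin (n+1) × Perm (Fin n) =>
            ((Perm.sign (twF pe.1 pe.2) : ℤ) : ℂ) *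
              (∏ j : Fin (n+1),
                ((1 - w (twF pe.1 pe.2 j)) / w (twF pe.1 pe.2 j)) ^ ((n+1) - (j:ℕ))) *
              (∏ k : Fin (n+1), (1 - ∏ j ∈ Finset.Ici k, w (twF pe.1 pe.2 j)))⁻¹)
          (fun σ : Perm (Fin (n+1)) =>
            ((Perm.sign σ : ℤ) : ℂ) *
              (∏ j : Fin (n+1), ((1 - w (σ j)) / w (σ j)) ^ ((n+1) - (j:ℕ))) *
              (∏ k : Fin (n+1), (1 - ∏ j ∈ Finset.Ici k, w (σ j)))⁻¹)
          (fun pe => rfl)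
      rw [← hsum, Fintype.sum_prod_type]
      have hterm : ∀ (p : Fin (n+1)) (e : Perm (Fin n)),
          ((Perm.sign (twF p e) : ℤ) : ℂ) *
              (∏ j : Fin (n+1),
                ((1 - w (twF p e j)) / w (twF p e j)) ^ ((n+1) - (j:ℕ))) *
              (∏ k : Fin (n+1), (1 - ∏ j ∈ Finset.Ici k, w (twF p e j)))⁻¹
            = ((-1:ℂ)^(p:ℕ) * ((1 - w p)/w p)^(n+1) * ((1:ℂ) - ∏ j, w j)⁻¹) *
              (((Perm.sign e : ℤ) : ℂ) *
                (∏ i : Fin n,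
                  ((1 - w (p.succAbove (e i))) / w (p.succAbove (e i))) ^ (n - (i:ℕ))) *
                (∏ k : Fin n, (1 - ∏ i ∈ Finset.Ici k, w (p.succAbove (e i))))⁻¹) := by
        intro p e
        have h1 : ((Perm.sign (twF p e) : ℤ) : ℂ)
            = (-1)^(p:ℕ) * ((Perm.sign e : ℤ) : ℂ) := by
          rw [twF_sign]; push_cast; ring
        have h2 : (∏ j : Fin (n+1),
              ((1 - w (twF p e j)) / w (twF p e j)) ^ ((n+1) - (j:ℕ)))
            = ((1 - w p)/w p)^(n+1) *
              ∏ i : Fin n,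
                ((1 - w (p.succAbove (e i))) / w (p.succAbove (e i))) ^ (n - (i:ℕ)) := by
          rw [Fin.prod_univ_succ]
          congr 1
          · rw [twF_zero]; norm_num
          · refine Finset.prod_congr rfl fun i _ => ?_
            rw [twF_succ]
            congr 1
            simp [Fin.val_succ]
        have h3 : (∏ k : Fin (n+1), (1 - ∏ j ∈ Finset.Ici k, w (twF p e j)))
            = ((1:ℂ) - ∏ j, w j) *
              ∏ k : Fin n, (1 - ∏ i ∈ Finset.Ici k, w (p.succAbove (e i))) := by
          rw [Fin.prod_univ_succ]
          congr 1
          · rw [tw_Ici_zero]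
            congr 1
            exact Equiv.prod_comp (twF p e) w
          · refine Finset.prod_congr rfl fun k _ => ?_
            congr 1
            rw [tw_Ici_succ, Finset.prod_map]
            exact Finset.prod_congr rfl fun i _ => by
              rw [Function.Embedding.coeFn_mk, twF_succ]
        rw [h1, h2, h3, mul_inv]
        ring
      have hmain : ∀ p : Fin (n+1),
          (∑ e : Perm (Fin n),
            ((Perm.sign (twF p e) : ℤ) : ℂ) *
              (∏ j : Fin (n+1),
                ((1 - w (twF p e j)) / w (twF p e j)) ^ ((n+1) - (j:ℕ))) *
              (∏ k : Fin (n+1), (1 - ∏ j ∈ Finset.Ici k, w (twF p e j)))⁻¹)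
            = ((-1:ℂ)^(p:ℕ) * ((1 - w p)/w p)^(n+1) * ((1:ℂ) - ∏ j, w j)⁻¹) *
              ((∏ i : Fin n, w (p.succAbove i) ^ n)⁻¹ *
                (Matrix.of fun i j : Fin n => w (p.succAbove j) ^ (i : ℕ)).det) := by
        intro p
        rw [Finset.sum_congr rfl (fun e _ => hterm p e), ← Finset.mul_sum]
        congr 1
        refine IH (fun i => w (p.succAbove i)) (fun i => hw0 _) ?_
        intro S hSne
        have hmap : ∏ i ∈ S, w (p.succAbove i) = ∏ j ∈ S.map (p.succAboveEmb), w j := by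
          rw [Finset.prod_map]; rfl
        rw [hmap]
        exact hS _ (by simpa using hSne)
      rw [Finset.sum_congr rfl (fun p _ => hmain p)]
      have hdet : (Matrix.of fun i j : Fin (n+1) => w j ^ (i:ℕ)).det
          = ((1:ℂ) - ∏ j, w j)⁻¹ *
            ∑ p : Fin (n+1), (-1:ℂ)^(p:ℕ) * (1 - w p)^(n+1) *
              (Matrix.of fun (i j : Fin n) => w (p.succAbove j) ^ ((i:ℕ)+1)).det := by
        rw [tw_key_det n w, inv_mul_cancel_left₀ hW]
      rw [hdet, Finset.mul_sum, Finset.mul_sum]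
      refine Finset.sum_congr rfl fun p _ => ?_
      have hD : (Matrix.of fun (i j : Fin n) => w (p.succAbove j) ^ ((i:ℕ)+1)).det
          = (∏ i : Fin n, w (p.succAbove i)) *
            (Matrix.of fun i j : Fin n => w (p.succAbove j) ^ (i : ℕ)).det := by
        have he : (Matrix.of fun (i j : Fin n) => w (p.succAbove j) ^ ((i:ℕ)+1))
            = Matrix.of fun i j => w (p.succAbove j) *
                (Matrix.of fun i j : Fin n => w (p.succAbove j) ^ (i : ℕ)) i j := by
          ext i j; simp [pow_succ']
        rw [he, Matrix.det_mul_row]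
      have hsplit : (∏ j : Fin (n+1), w j ^ (n+1))
          = w p ^ (n+1) * ∏ i : Fin n, w (p.succAbove i) ^ (n+1) :=
        Fin.prod_univ_succAbove (fun j => w j ^ (n+1)) p
      have hpow : (∏ i : Fin n, w (p.succAbove i) ^ (n+1))
          = (∏ i : Fin n, w (p.succAbove i)) * ∏ i : Fin n, w (p.succAbove i) ^ n := by
        rw [← Finset.prod_mul_distrib]
        exact Finset.prod_congr rfl fun i _ => pow_succ' _ _
      have h1 : w p ^ (n+1) ≠ 0 := pow_ne_zero _ (hw0 p)
      have h2 : (∏ i : Fin n, w (p.succAbove i)) ≠ 0 :=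
        Finset.prod_ne_zero_iff.mpr fun i _ => hw0 _
      have h3 : (∏ i : Fin n, w (p.succAbove i) ^ n) ≠ 0 :=
        Finset.prod_ne_zero_iff.mpr fun i _ => pow_ne_zero _ (hw0 _)
      rw [hD, hsplit, hpow, div_pow]
      field_simp

/-- The Tracy–Widom type symmetrization identity (2.9): for nonzero `w_1,…,w_n` such that
no nonempty subproduct equals `1`,
`∑_{σ∈S_n} sgn(σ) ∏_j ((1-w_{σ(j)})/w_{σ(j)})^j ·
  [(1-w_{σ(1)})(1-w_{σ(1)}w_{σ(2)})⋯(1-w_{σ(1)}⋯w_{σ(n)})]⁻¹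
  = (-1)^{n(n-1)/2} (∏_j w_j^{-n}) · det(w_j^{i-1})`. -/
theorem symmetrization_identity_one (n : ℕ) (hn : 1 ≤ n) (w : Fin n → ℂ)
    (hw0 : ∀ j, w j ≠ 0)
    (hS : ∀ S : Finset (Fin n), S.Nonempty → (∏ j ∈ S, w j) ≠ 1) :
    (∑ σ : Perm (Fin n),
        ((Perm.sign σ : ℤ) : ℂ) *
          (∏ j : Fin n, ((1 - w (σ j)) / w (σ j)) ^ ((j : ℕ) + 1)) *
          (∏ k : Fin n, (1 - ∏ j ∈ Finset.Iic k, w (σ j)))⁻¹) =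
      (-1 : ℂ) ^ (n * (n - 1) / 2) * (∏ j : Fin n, w j ^ (-(n : ℤ))) *
        Matrix.det (Matrix.of fun i j : Fin n => w j ^ (i : ℕ)) := by
  have hrev1 : ∀ j : Fin n, ((Fin.rev j : ℕ) + 1) = n - (j:ℕ) := fun j => by
    rw [Fin.val_rev]; omega
  rw [← Equiv.sum_comp (Equiv.mulRight (Fin.revPerm : Perm (Fin n)))
      (fun σ : Perm (Fin n) =>
        ((Perm.sign σ : ℤ) : ℂ) *
          (∏ j : Fin n, ((1 - w (σ j)) / w (σ j)) ^ ((j : ℕ) + 1)) *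
          (∏ k : Fin n, (1 - ∏ j ∈ Finset.Iic k, w (σ j)))⁻¹)]
  have hterm : ∀ τ : Perm (Fin n),
      ((Perm.sign (Equiv.mulRight Fin.revPerm τ) : ℤ) : ℂ) *
        (∏ j : Fin n,
          ((1 - w (Equiv.mulRight Fin.revPerm τ j)) /
            w (Equiv.mulRight Fin.revPerm τ j)) ^ ((j : ℕ) + 1)) *
        (∏ k : Fin n, (1 - ∏ j ∈ Finset.Iic k, w (Equiv.mulRight Fin.revPerm τ j)))⁻¹
      = ((-1 : ℂ) ^ (n * (n - 1) / 2)) *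
        (((Perm.sign τ : ℤ) : ℂ) *
          (∏ j : Fin n, ((1 - w (τ j)) / w (τ j)) ^ (n - (j : ℕ))) *
          (∏ k : Fin n, (1 - ∏ j ∈ Finset.Ici k, w (τ j)))⁻¹) := by
    intro τ
    have hm : Equiv.mulRight (Fin.revPerm : Perm (Fin n)) τ = τ * Fin.revPerm := rfl
    rw [hm]
    have happ : ⇑(τ * (Fin.revPerm : Perm (Fin n))) = fun j => τ (Fin.rev j) := by
      funext j
      simp [Equiv.Perm.coe_mul]
    rw [happ]
    have h1 : ((Perm.sign (τ * (Fin.revPerm : Perm (Fin n))) : ℤ) : ℂ)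
        = ((-1 : ℂ) ^ (n * (n - 1) / 2)) * ((Perm.sign τ : ℤ) : ℂ) := by
      rw [Equiv.Perm.sign_mul, tw_sign_revPerm]
      push_cast
      ring
    have h2 : (∏ j : Fin n,
          ((1 - w (τ (Fin.rev j))) / w (τ (Fin.rev j))) ^ ((j : ℕ) + 1))
        = ∏ j : Fin n, ((1 - w (τ j)) / w (τ j)) ^ (n - (j : ℕ)) := by
      calc (∏ j : Fin n, ((1 - w (τ (Fin.rev j))) / w (τ (Fin.rev j))) ^ ((j:ℕ)+1))
          = ∏ j : Fin n, ((1 - w (τ (Fin.rev j))) / w (τ (Fin.rev j)))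
              ^ ((Fin.rev (Fin.rev j) : ℕ) + 1) := by
            refine Finset.prod_congr rfl fun j _ => by rw [Fin.rev_rev]
        _ = ∏ j : Fin n, ((1 - w (τ j)) / w (τ j)) ^ ((Fin.rev j : ℕ) + 1) :=
            Equiv.prod_comp Fin.revPerm
              (fun j => ((1 - w (τ j)) / w (τ j)) ^ ((Fin.rev j : ℕ) + 1))
        _ = ∏ j : Fin n, ((1 - w (τ j)) / w (τ j)) ^ (n - (j : ℕ)) := by
            refine Finset.prod_congr rfl fun j _ => by rw [hrev1]
    have h3 : (∏ k : Fin n, (1 - ∏ j ∈ Finset.Iic k, w (τ (Fin.rev j))))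
        = ∏ k : Fin n, (1 - ∏ j ∈ Finset.Ici k, w (τ j)) := by
      calc (∏ k : Fin n, (1 - ∏ j ∈ Finset.Iic k, w (τ (Fin.rev j))))
          = ∏ k : Fin n, (1 - ∏ j ∈ Finset.Ici (Fin.rev k), w (τ j)) := by
            refine Finset.prod_congr rfl fun k _ => by
              rw [tw_prod_Iic_rev (fun j => w (τ j)) k]
        _ = ∏ k : Fin n, (1 - ∏ j ∈ Finset.Ici k, w (τ j)) :=
            Equiv.prod_comp Fin.revPerm
              (fun k => 1 - ∏ j ∈ Finset.Ici k, w (τ j))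
    rw [h1, h2, h3]
    ring
  rw [Finset.sum_congr rfl (fun τ _ => hterm τ), ← Finset.mul_sum,
    tw_keyB n w hw0 hS]
  have hz : (∏ j : Fin n, w j ^ (-(n : ℤ))) = (∏ j : Fin n, w j ^ n)⁻¹ := by
    rw [← Finset.prod_inv_distrib]
    exact Finset.prod_congr rfl fun j _ => by rw [zpow_neg, zpow_natCast]
  rw [hz]
  ring
end

section
/- Let n ≥ 1 and let z_1,…,z_n, w_1,…,w_n be complex numbers with z_j ≠ 0, w_j ≠ 0, w_j ≠ 1 for all j, w_i ≠ z_j for all i,j, and such that ∏_{j∈S} z_j ≠ ∏_{j∈T} w_j for all subsets S,T ⊆ {1,…,n} of equal nonzero cardinality. Then ∑_{σ_1,σ_2∈S_n} sgn(σ_1)sgn(σ_2) ∏_{j=1}^n ( w_{σ_2(j)}(1−z_{σ_1(j)}) / ( z_{σ_1(j)}(1−w_{σ_2(j)}) ) )^j · ∏_{k=1}^n ( 1 − (z_{σ_1(1)}⋯z_{σ_1(k)})/(w_{σ_2(1)}⋯w_{σ_2(k)}) )^{−1} = ( ∏_{j=1}^n w_j^{n+1}(1−z_j)^n / ( z_j^n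 (1−w_j)^n ) ) · det( 1/(w_j−z_i) )_{1≤i,j≤n}. -/
open scoped BigOperators

open Finset Equiv

namespace JoSymAux

noncomputable section

/-- The summand of the reversed-index form. -/
def S (n : ℕ) (z w : Fin n → ℂ) (σ₁ σ₂ : Equiv.Perm (Fin n)) : ℂ :=
  ((Equiv.Perm.sign σ₁ : ℤ) : ℂ) * ((Equiv.Perm.sign σ₂ : ℤ) : ℂ) *
    (∏ j : Fin n, (w (σ₂ j) * (1 - z (σ₁ j)) / (z (σ₁ j) * (1 - w (σ₂ j)))) ^ (n - (j : ℕ))) *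
    ∏ k : Fin n, (1 - (∏ j ∈ Finset.Ici k, z (σ₁ j)) / ∏ j ∈ Finset.Ici k, w (σ₂ j))⁻¹

def F (n : ℕ) (z w : Fin n → ℂ) : ℂ :=
  ∑ σ₁ : Equiv.Perm (Fin n), ∑ σ₂ : Equiv.Perm (Fin n), S n z w σ₁ σ₂

def G (n : ℕ) (z w : Fin n → ℂ) : ℂ :=
  (∏ j : Fin n, w j ^ (n + 1) * (1 - z j) ^ n / (z j ^ n * (1 - w j) ^ n)) *
    Matrix.det (Matrix.of fun i j : Fin n => (w j - z i)⁻¹)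

/-- the explicit Cramer solution vector -/
def vv (n : ℕ) (z w : Fin n → ℂ) (q : Fin n) : ℂ :=
  (w q - (∏ i, w i) / (∏ i, z i)) * (∏ i, (z i - w q)) /
    (w q * ∏ r ∈ Finset.univ.erase q, (w r - w q))

/-- the permutation on `Fin n` relating `swap 0 p ∘ succ` to `p.succAbove`. -/
def cyc {n : ℕ} (p : Fin (n + 1)) : Equiv.Perm (Fin n) :=
  if h : p = 0 then 1 else (p.pred h).cycleRange

theorem swap_succ_eq {n : ℕ} (p : Fin (n + 1)) (y : Fin n) :
    Equiv.swap 0 p y.succ = p.succAbove (cyc p y) := by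
  rcases eq_or_ne p 0 with rfl | h
  · simp [cyc, Fin.succAbove_zero]
  · have := Fin.succAbove_cycleRange (p.pred h) ((p.pred h).cycleRange.symm ((p.pred h).cycleRange y))
    rw [cyc, dif_neg h]
    have h2 := Fin.succAbove_cycleRange (p.pred h) y
    rw [Fin.succ_pred] at h2
    exact h2.symm

theorem sign_cyc_mul {n : ℕ} (p : Fin (n + 1)) :
    ((if p = 0 then (1 : ℤˣ) else -1) * Equiv.Perm.sign (cyc p) : ℤˣ) = (-1) ^ (p : ℕ) := by
  rcases eq_or_ne p 0 with rfl | h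
  · simp [cyc]
  · rw [if_neg h, cyc, dif_neg h, Fin.sign_cycleRange]
    have hp : 0 < (p : ℕ) := Fin.pos_iff_ne_zero.mpr h
    have : (p : ℕ) = (p.pred h : ℕ) + 1 := by rw [Fin.coe_pred]; omega
    rw [this, pow_succ, mul_comm]

theorem prod_Ici_succ {n : ℕ} (f : Fin (n + 1) → ℂ) (i : Fin n) :
    ∏ j ∈ Finset.Ici i.succ, f j = ∏ j ∈ Finset.Ici i, f j.succ := by
  have h : Finset.Ici i.succ = (Finset.Ici i).map ⟨Fin.succ, Fin.succ_injective n⟩ := by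
    ext j
    simp only [Finset.mem_Ici, Finset.mem_map, Function.Embedding.coeFn_mk]
    constructor
    · intro hj
      have hj0 : j ≠ 0 := by
        rintro rfl
        exact absurd hj (by simp [Fin.le_def])
      refine ⟨j.pred hj0, ?_, Fin.succ_pred j hj0⟩
      rw [← Fin.succ_le_succ_iff, Fin.succ_pred]
      exact hj
    · rintro ⟨a, ha, rfl⟩
      exact Fin.succ_le_succ_iff.mpr ha
  rw [h, Finset.prod_map]
  rfl

theorem prod_Ici_zero {n : ℕ} (f : Fin (n + 1) → ℂ) :
    ∏ j ∈ Finset.Ici (0 : Fin (n + 1)), f j = ∏ j, f j := by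
  congr 1
  ext j
  simp [Fin.zero_le]

theorem image_rev_Iic {n : ℕ} (k : Fin n) :
    (Finset.Iic k).image Fin.rev = Finset.Ici k.rev := by
  ext j
  simp only [Finset.mem_image, Finset.mem_Iic, Finset.mem_Ici]
  constructor
  · rintro ⟨x, hx, rfl⟩
    exact Fin.rev_le_rev.mpr hx
  · intro hj
    refine ⟨j.rev, ?_, Fin.rev_rev j⟩
    rw [← Fin.rev_rev k]
    exact Fin.rev_le_rev.mpr hj

/-- Lagrange-type key identities. -/
theorem prod_neg_eq {R : Type*} [CommRing R] {ι : Type*} (s : Finset ι) (f : ι → R) :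
    ∏ r ∈ s, -f r = (-1) ^ s.card * ∏ r ∈ s, f r := by
  rw [← Finset.prod_const, ← Finset.prod_mul_distrib]
  simp

open Polynomial in
theorem key_poly {m : ℕ} (z w : Fin m → ℂ) (hz0 : ∀ i, z i ≠ 0) (hw0 : ∀ q, w q ≠ 0)
    (hw1 : ∀ q, w q ≠ 1) (hwz : ∀ i j, w i ≠ z j) (hinjw : Function.Injective w) :
    (∀ i, ∑ q, (w q - z i)⁻¹ * vv m z w q = (1 - z i) / z i) ∧
      (∑ q, (1 - w q)⁻¹ * vv m z w q =
        -((1 - (∏ i, w i) / (∏ i, z i)) * (∏ i, (1 - z i)) / ∏ i, (1 - w i))) := by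
  have hZ0 : (∏ i, z i) ≠ 0 := Finset.prod_ne_zero_iff.mpr fun i _ => hz0 i
  have hW0 : (∏ i, w i) ≠ 0 := Finset.prod_ne_zero_iff.mpr fun i _ => hw0 i
  set c : ℂ := (∏ i, w i) / (∏ i, z i) with hcdef
  set g : ℂ[X] := ∑ q : Fin m, C (vv m z w q) *
      (X * ∏ r ∈ univ.erase q, (C (w r) - X)) with hg
  set h : ℂ[X] := (C 1 - X) * ∏ r, (C (w r) - X) + (X - C c) * ∏ i, (C (z i) - X) with hh
  have hden : ∀ q, w q * ∏ r ∈ univ.erase q, (w r - w q) ≠ 0 := by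
    intro q
    refine mul_ne_zero (hw0 q) (Finset.prod_ne_zero_iff.mpr fun r hr => ?_)
    exact sub_ne_zero.mpr fun hrw => (Finset.mem_erase.mp hr).1 (hinjw hrw)
  have evalg : ∀ x : ℂ, g.eval x =
      ∑ q, vv m z w q * (x * ∏ r ∈ univ.erase q, (w r - x)) := by
    intro x
    rw [hg, eval_finset_sum]
    refine Finset.sum_congr rfl fun q _ => ?_
    simp [eval_prod]
  have evalh : ∀ x : ℂ, h.eval x =
      (1 - x) * (∏ r, (w r - x)) + (x - c) * ∏ i, (z i - x) := by
    intro x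
    simp [hh, eval_prod]
  have hgh : g = h := by
    rw [← sub_eq_zero]
    apply Polynomial.eq_zero_of_natDegree_lt_card_of_eval_eq_zero' _
      (insert (0 : ℂ) (univ.image w))
    · intro x hx
      rw [eval_sub, sub_eq_zero]
      rcases Finset.mem_insert.mp hx with rfl | hx
      · rw [evalg, evalh]
        simp [div_mul_cancel₀ _ hZ0]
        rw [hcdef, div_mul_cancel₀ _ hZ0]; ring
      · obtain ⟨q, -, rfl⟩ := Finset.mem_image.mp hx
        rw [evalg, evalh]
        rw [Finset.sum_eq_single q]
        · have h2 : ∏ r, (w r - w q) = 0 :=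
            Finset.prod_eq_zero (Finset.mem_univ q) (sub_self _)
          rw [h2, mul_zero, zero_add]
          rw [vv, div_mul_cancel₀ _ (hden q)]
        · intro q' _ hq'
          have : ∏ r ∈ univ.erase q', (w r - w q) = 0 :=
            Finset.prod_eq_zero (Finset.mem_erase.mpr ⟨Ne.symm hq', Finset.mem_univ q⟩)
              (sub_self _)
          rw [this, mul_zero, mul_zero]
        · intro hq
          exact absurd (Finset.mem_univ q) hq
    · -- degree bound
      have hcard : (insert (0 : ℂ) (univ.image w)).card = m + 1 := by
        rw [Finset.card_insert_of_notMem, Finset.card_image_of_injective _ hinjw,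
          Finset.card_univ, Fintype.card_fin]
        intro h0
        obtain ⟨q, -, hq⟩ := Finset.mem_image.mp h0
        exact hw0 q hq
      rw [hcard]
      have hdg : g.natDegree ≤ m := by
        rw [hg]
        apply Polynomial.natDegree_sum_le_of_forall_le
        intro q _
        have hm : 1 ≤ m := q.pos
        have hone : ∀ r ∈ univ.erase q, (C (w r) - X : ℂ[X]).natDegree ≤ 1 := by
          intro r _
          have e : (C (w r) - X : ℂ[X]) = -(X - C (w r)) := by ring
          rw [e, natDegree_neg, natDegree_X_sub_C]
        have h2 : (∏ r ∈ univ.erase q, (C (w r) - X) : ℂ[X]).natDegree ≤ m - 1 := by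
          refine (Polynomial.natDegree_prod_le _ _).trans ?_
          refine le_trans (Finset.sum_le_sum hone) ?_
          simp [Finset.card_erase_of_mem]
        refine natDegree_mul_le.trans ?_
        rw [natDegree_C, zero_add]
        refine le_trans natDegree_mul_le ?_
        rw [natDegree_X]
        omega
      have hdh : h.natDegree ≤ m := by
        set P1 : ℂ[X] := (X - C 1) * ∏ r, (X - C (w r)) with hP1
        set P2 : ℂ[X] := (X - C c) * ∏ i, (X - C (z i)) with hP2
        have hm1 : (monic_X_sub_C (1 : ℂ)).mul
            (monic_prod_of_monic univ (fun r => X - C (w r)) fun r _ => monic_X_sub_C _) =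
            (monic_X_sub_C (1 : ℂ)).mul
            (monic_prod_of_monic univ (fun r => X - C (w r)) fun r _ => monic_X_sub_C _) := rfl
        have hP1m : P1.Monic :=
          (monic_X_sub_C 1).mul (monic_prod_of_monic _ _ fun r _ => monic_X_sub_C _)
        have hP2m : P2.Monic :=
          (monic_X_sub_C c).mul (monic_prod_of_monic _ _ fun i _ => monic_X_sub_C _)
        have hprodsdeg : ∀ f : Fin m → ℂ, (∏ r, (X - C (f r)) : ℂ[X]).natDegree = m := by
          intro f
          rw [Polynomial.natDegree_prod _ _ fun r _ => X_sub_C_ne_zero (f r)]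
          simp [natDegree_X_sub_C]
        have hd1 : P1.natDegree = m + 1 := by
          rw [hP1, (monic_X_sub_C 1).natDegree_mul
            (monic_prod_of_monic _ _ fun r _ => monic_X_sub_C _), natDegree_X_sub_C,
            hprodsdeg w]
          omega
        have hd2 : P2.natDegree = m + 1 := by
          rw [hP2, (monic_X_sub_C c).natDegree_mul
            (monic_prod_of_monic _ _ fun i _ => monic_X_sub_C _), natDegree_X_sub_C,
            hprodsdeg z]
          omega
        have hfact : h = (-1 : ℂ[X]) ^ (m + 1) * (P1 - P2) := by
          rw [hh, hP1, hP2]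
          have e1 : (∏ r, (C (w r) - X) : ℂ[X]) = (-1) ^ m * ∏ r, (X - C (w r)) := by
            rw [Finset.prod_congr rfl fun r _ => (by ring : (C (w r) - X : ℂ[X]) = -(X - C (w r))),
              prod_neg_eq, Finset.card_univ, Fintype.card_fin]
          have e2 : (∏ i, (C (z i) - X) : ℂ[X]) = (-1) ^ m * ∏ i, (X - C (z i)) := by
            rw [Finset.prod_congr rfl fun i _ => (by ring : (C (z i) - X : ℂ[X]) = -(X - C (z i))),
              prod_neg_eq, Finset.card_univ, Fintype.card_fin]
          rw [e1, e2]
          have ec1 : (C 1 - X : ℂ[X]) = -(X - C 1) := by ring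
          rw [ec1]
          ring
        have hsub : (P1 - P2).natDegree ≤ m := by
          by_cases h0 : P1 - P2 = 0
          · simp [h0]
          · have hdlt : (P1 - P2).degree < P1.degree := by
              apply Polynomial.degree_sub_lt
              · rw [Polynomial.degree_eq_natDegree hP1m.ne_zero,
                  Polynomial.degree_eq_natDegree hP2m.ne_zero, hd1, hd2]
              · exact hP1m.ne_zero
              · rw [hP1m.leadingCoeff, hP2m.leadingCoeff]
            rw [Polynomial.degree_eq_natDegree hP1m.ne_zero, hd1] at hdlt
            have := (Polynomial.natDegree_lt_iff_degree_lt h0).mpr (by exact_mod_cast hdlt)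
            omega
        calc h.natDegree ≤ ((-1 : ℂ[X]) ^ (m + 1)).natDegree + (P1 - P2).natDegree :=
              hfact ▸ natDegree_mul_le
          _ ≤ m := by
              simpa [natDegree_pow] using hsub
      have : (g - h).natDegree ≤ m := le_trans (natDegree_sub_le g h) (max_le hdg hdh)
      omega
  constructor
  · intro i
    have hne : ∀ q, w q - z i ≠ 0 := fun q => sub_ne_zero.mpr (hwz q i)
    have hprod : (∏ r, (w r - z i)) ≠ 0 := Finset.prod_ne_zero_iff.mpr fun r _ => hne r
    have key : g.eval (z i) = h.eval (z i) := by rw [hgh]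
    rw [evalg, evalh] at key
    have h2 : ∏ j, (z j - z i) = 0 := Finset.prod_eq_zero (Finset.mem_univ i) (sub_self _)
    rw [h2, mul_zero, add_zero] at key
    have hfac : z i * ∏ r, (w r - z i) ≠ 0 := mul_ne_zero (hz0 i) hprod
    apply mul_right_cancel₀ hfac
    rw [Finset.sum_mul]
    have hterm : ∀ q, (w q - z i)⁻¹ * vv m z w q * (z i * ∏ r, (w r - z i)) =
        vv m z w q * (z i * ∏ r ∈ univ.erase q, (w r - z i)) := by
      intro q
      rw [← Finset.mul_prod_erase univ _ (Finset.mem_univ q)]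
      have hinv : (w q - z i)⁻¹ * (w q - z i) = 1 := inv_mul_cancel₀ (hne q)
      calc (w q - z i)⁻¹ * vv m z w q *
            (z i * ((w q - z i) * ∏ r ∈ univ.erase q, (w r - z i)))
          = ((w q - z i)⁻¹ * (w q - z i)) *
            (vv m z w q * (z i * ∏ r ∈ univ.erase q, (w r - z i))) := by ring
        _ = vv m z w q * (z i * ∏ r ∈ univ.erase q, (w r - z i)) := by rw [hinv]; ring
    rw [Finset.sum_congr rfl fun q _ => hterm q, key]
    field_simp [hz0 i]
  · have h1w : ∀ q, (1 : ℂ) - w q ≠ 0 := fun q => sub_ne_zero.mpr fun e => hw1 q e.symm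
    have hw1' : ∀ q, w q - 1 ≠ 0 := fun q => sub_ne_zero.mpr (hw1 q)
    have hprod : (∏ r, (w r - 1 : ℂ)) ≠ 0 := Finset.prod_ne_zero_iff.mpr fun r _ => hw1' r
    have hprod1 : (∏ r, ((1 : ℂ) - w r)) ≠ 0 := Finset.prod_ne_zero_iff.mpr fun r _ => h1w r
    have key : g.eval 1 = h.eval 1 := by rw [hgh]
    rw [evalg, evalh] at key
    rw [sub_self, zero_mul, zero_add] at key
    apply mul_right_cancel₀ hprod
    rw [Finset.sum_mul]
    have hterm : ∀ q, (1 - w q)⁻¹ * vv m z w q * (∏ r, (w r - 1)) =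
        -(vv m z w q * (1 * ∏ r ∈ univ.erase q, (w r - 1))) := by
      intro q
      rw [← Finset.mul_prod_erase univ _ (Finset.mem_univ q)]
      have hinv : (1 - w q)⁻¹ * (w q - 1) = -1 := by
        rw [(by ring : w q - 1 = -(1 - w q))]
        rw [mul_neg, inv_mul_cancel₀ (h1w q)]
      calc (1 - w q)⁻¹ * vv m z w q * ((w q - 1) * ∏ r ∈ univ.erase q, (w r - 1))
          = ((1 - w q)⁻¹ * (w q - 1)) * (vv m z w q * ∏ r ∈ univ.erase q, (w r - 1)) := by
            ring
        _ = -(vv m z w q * (1 * ∏ r ∈ univ.erase q, (w r - 1))) := by rw [hinv]; ring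
    rw [Finset.sum_congr rfl fun q _ => hterm q, Finset.sum_neg_distrib, key]
    have ez : (∏ i, (z i - 1) : ℂ) = (-1) ^ m * ∏ i, (1 - z i) := by
      rw [Finset.prod_congr rfl fun i _ => (by ring : z i - 1 = -(1 - z i)),
        prod_neg_eq, Finset.card_univ, Fintype.card_fin]
    have ew : (∏ r, (w r - 1) : ℂ) = (-1) ^ m * ∏ r, (1 - w r) := by
      rw [Finset.prod_congr rfl fun r _ => (by ring : w r - 1 = -(1 - w r)),
        prod_neg_eq, Finset.card_univ, Fintype.card_fin]
    rw [ez, ew]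
    field_simp

theorem cofactor_sum {m : ℕ} (M : Matrix (Fin (m + 1)) (Fin (m + 1)) ℂ)
    (a b v : Fin (m + 1) → ℂ) (hv : ∀ i, ∑ p, M i p * v p = a i) :
    (∑ p : Fin (m + 1), ∑ q : Fin (m + 1),
        (-1 : ℂ) ^ ((p : ℕ) + (q : ℕ)) * a p * b q *
          (M.submatrix p.succAbove q.succAbove).det) =
      (∑ q, b q * v q) * M.det := by
  have ha : a = fun k => ∑ p, v p • M k p := by
    funext k
    rw [← hv k]
    simp [smul_eq_mul, mul_comm]
  have key : ∀ q : Fin (m + 1),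
      (∑ p : Fin (m + 1), (-1 : ℂ) ^ ((p : ℕ) + (q : ℕ)) * a p *
        (M.submatrix p.succAbove q.succAbove).det) = v q * M.det := by
    intro q
    have h1 : (M.updateCol q a).det = v q * M.det := by
      rw [ha]
      simpa [smul_eq_mul] using Matrix.det_updateCol_sum M q v
    have h2 := Matrix.det_succ_column (M.updateCol q a) q
    rw [h1] at h2
    rw [h2]
    refine Finset.sum_congr rfl fun p _ => ?_
    congr 1
    · congr 1
      simp [Matrix.updateCol_apply]
    · congr 1
      ext i j
      simp only [Matrix.submatrix_apply, Matrix.updateCol_apply,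
        if_neg (Fin.succAbove_ne q j)]
  rw [Finset.sum_comm, Finset.sum_mul]
  refine Finset.sum_congr rfl fun q _ => ?_
  rw [mul_assoc, ← key q, Finset.mul_sum]
  refine Finset.sum_congr rfl fun p _ => ?_
  ring

theorem S_decompose {n : ℕ} (z w : Fin (n + 1) → ℂ) (p q : Fin (n + 1))
    (e₁ e₂ : Equiv.Perm (Fin n)) :
    S (n + 1) z w (Equiv.Perm.decomposeFin.symm (p, e₁)) (Equiv.Perm.decomposeFin.symm (q, e₂)) =
      ((-1 : ℂ) ^ ((p : ℕ) + (q : ℕ))) *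
        (w q * (1 - z p) / (z p * (1 - w q))) ^ (n + 1) *
        (1 - (∏ j, z j) / (∏ j, w j))⁻¹ *
        S n (z ∘ p.succAbove) (w ∘ q.succAbove) (cyc p * e₁) (cyc q * e₂) := by
  have hsgn : ∀ (p : Fin (n + 1)) (e : Equiv.Perm (Fin n)),
      ((Equiv.Perm.sign (Equiv.Perm.decomposeFin.symm (p, e)) : ℤ) : ℂ) =
        (-1) ^ (p : ℕ) * ((Equiv.Perm.sign (cyc p * e) : ℤ) : ℂ) := by
    intro p e
    rw [Equiv.Perm.decomposeFin.symm_sign, map_mul]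
    rcases eq_or_ne p 0 with rfl | hp
    · simp [cyc]
    · rw [if_neg hp, cyc, dif_neg hp, Fin.sign_cycleRange]
      have hppos : 0 < (p : ℕ) := Fin.pos_iff_ne_zero.mpr hp
      have hp1 : (p : ℕ) = (p.pred hp : ℕ) + 1 := by rw [Fin.coe_pred]; omega
      rw [hp1]
      push_cast [Units.val_mul, Units.val_pow_eq_pow_val]
      have h2 : ((-1 : ℂ)) ^ ((p.pred hp : ℕ)) * ((-1 : ℂ)) ^ ((p.pred hp : ℕ)) = 1 := by
        rw [← pow_add, ← two_mul, pow_mul, neg_one_sq, one_pow]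
      linear_combination ((Equiv.Perm.sign e : ℤ) : ℂ) * h2
  set σ₁ := Equiv.Perm.decomposeFin.symm (p, e₁) with hσ₁
  set σ₂ := Equiv.Perm.decomposeFin.symm (q, e₂) with hσ₂
  have happ₁ : ∀ x : Fin n, z (σ₁ x.succ) = (z ∘ p.succAbove) ((cyc p * e₁) x) := by
    intro x
    rw [hσ₁, Equiv.Perm.decomposeFin_symm_apply_succ, swap_succ_eq]
    rfl
  have happ₂ : ∀ x : Fin n, w (σ₂ x.succ) = (w ∘ q.succAbove) ((cyc q * e₂) x) := by
    intro x
    rw [hσ₂, Equiv.Perm.decomposeFin_symm_apply_succ, swap_succ_eq]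
    rfl
  have hzero₁ : z (σ₁ 0) = z p := by rw [hσ₁, Equiv.Perm.decomposeFin_symm_apply_zero]
  have hzero₂ : w (σ₂ 0) = w q := by rw [hσ₂, Equiv.Perm.decomposeFin_symm_apply_zero]
  simp only [S]
  rw [Fin.prod_univ_succ
    (fun j => (w (σ₂ j) * (1 - z (σ₁ j)) / (z (σ₁ j) * (1 - w (σ₂ j)))) ^ ((n + 1) - (j : ℕ)))]
  rw [Fin.prod_univ_succ
    (fun k => (1 - (∏ j ∈ Finset.Ici k, z (σ₁ j)) / ∏ j ∈ Finset.Ici k, w (σ₂ j))⁻¹)]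
  have hratio : (∏ x : Fin n, (w (σ₂ x.succ) * (1 - z (σ₁ x.succ)) /
        (z (σ₁ x.succ) * (1 - w (σ₂ x.succ)))) ^ ((n + 1) - ((x.succ : Fin (n + 1)) : ℕ))) =
      ∏ x : Fin n, ((w ∘ q.succAbove) ((cyc q * e₂) x) * (1 - (z ∘ p.succAbove) ((cyc p * e₁) x)) /
        ((z ∘ p.succAbove) ((cyc p * e₁) x) * (1 - (w ∘ q.succAbove) ((cyc q * e₂) x)))) ^
          (n - (x : ℕ)) := by
    refine Finset.prod_congr rfl fun x _ => ?_
    rw [happ₁, happ₂, Fin.val_succ, Nat.succ_sub_succ]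
  have hchain : (∏ x : Fin n,
        (1 - (∏ j ∈ Finset.Ici x.succ, z (σ₁ j)) / ∏ j ∈ Finset.Ici x.succ, w (σ₂ j))⁻¹) =
      ∏ x : Fin n, (1 - (∏ j ∈ Finset.Ici x, (z ∘ p.succAbove) ((cyc p * e₁) j)) /
        ∏ j ∈ Finset.Ici x, (w ∘ q.succAbove) ((cyc q * e₂) j))⁻¹ := by
    refine Finset.prod_congr rfl fun x _ => ?_
    rw [prod_Ici_succ (fun j => z (σ₁ j)), prod_Ici_succ (fun j => w (σ₂ j))]
    rw [Finset.prod_congr rfl fun j _ => happ₁ j, Finset.prod_congr rfl fun j _ => happ₂ j]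
  have h0chain : (1 - (∏ j ∈ Finset.Ici (0 : Fin (n + 1)), z (σ₁ j)) /
        ∏ j ∈ Finset.Ici (0 : Fin (n + 1)), w (σ₂ j))⁻¹ =
      (1 - (∏ j, z j) / ∏ j, w j)⁻¹ := by
    rw [prod_Ici_zero (fun j => z (σ₁ j)), prod_Ici_zero (fun j => w (σ₂ j)),
      Equiv.prod_comp σ₁ z, Equiv.prod_comp σ₂ w]
  rw [hratio, hchain, h0chain, hsgn p e₁, hsgn q e₂, hzero₁, hzero₂]
  rw [pow_add]
  simp only [Fin.val_zero, Nat.sub_zero]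
  ring

theorem F_succ {n : ℕ} (z w : Fin (n + 1) → ℂ) :
    F (n + 1) z w = ∑ p : Fin (n + 1), ∑ q : Fin (n + 1),
      ((-1 : ℂ) ^ ((p : ℕ) + (q : ℕ))) *
        (w q * (1 - z p) / (z p * (1 - w q))) ^ (n + 1) *
        (1 - (∏ j, z j) / (∏ j, w j))⁻¹ *
        F n (z ∘ p.succAbove) (w ∘ q.succAbove) := by
  have step1 : F (n + 1) z w = ∑ p : Fin (n + 1), ∑ e₁ : Equiv.Perm (Fin n),
      ∑ q : Fin (n + 1), ∑ e₂ : Equiv.Perm (Fin n),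
        S (n + 1) z w (Equiv.Perm.decomposeFin.symm (p, e₁))
          (Equiv.Perm.decomposeFin.symm (q, e₂)) := by
    rw [F, ← Equiv.sum_comp (Equiv.Perm.decomposeFin.symm)
      (fun σ₁ => ∑ σ₂, S (n + 1) z w σ₁ σ₂), Fintype.sum_prod_type]
    refine Finset.sum_congr rfl fun p _ => Finset.sum_congr rfl fun e₁ _ => ?_
    rw [← Equiv.sum_comp (Equiv.Perm.decomposeFin.symm)
      (fun σ₂ => S (n + 1) z w (Equiv.Perm.decomposeFin.symm (p, e₁)) σ₂),
      Fintype.sum_prod_type]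
  rw [step1]
  refine Finset.sum_congr rfl fun p _ => ?_
  rw [Finset.sum_comm]
  refine Finset.sum_congr rfl fun q _ => ?_
  rw [Finset.sum_congr rfl fun e₁ _ => Finset.sum_congr rfl fun e₂ _ =>
    S_decompose z w p q e₁ e₂]
  simp_rw [← Finset.mul_sum]
  congr 1
  rw [F]
  refine Eq.trans ?_ (Equiv.sum_comp (Equiv.mulLeft (cyc p))
    (fun f₁ => ∑ f₂, S n (z ∘ p.succAbove) (w ∘ q.succAbove) f₁ f₂))
  refine Finset.sum_congr rfl fun e₁ _ => ?_
  refine Eq.trans ?_ (Equiv.sum_comp (Equiv.mulLeft (cyc q))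
    (fun f₂ => S n (z ∘ p.succAbove) (w ∘ q.succAbove) (cyc p * e₁) f₂))
  simp [Equiv.coe_mulLeft]

theorem scalar_aux (Z W Q1 Q2 Pz Pw : ℂ) (hZ : Z ≠ 0) (hW : W ≠ 0)
    (h1 : 1 - Z / W ≠ 0) (hQ2 : Q2 ≠ 0) :
    (1 - Z / W)⁻¹ * Pz * Pw * (-((1 - W / Z) * Q1 / Q2)) =
      Pz * Pw * (Q1 * W * Z⁻¹ * Q2⁻¹) := by
  have h2 : W - Z ≠ 0 := by
    intro h
    apply h1
    rw [sub_eq_zero] at h ⊢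
    rw [← h, div_self hW]
  field_simp
  ring

theorem main_lemma : ∀ (n : ℕ) (z w : Fin n → ℂ), (∀ j, z j ≠ 0) → (∀ j, w j ≠ 0) →
    (∀ j, w j ≠ 1) → (∀ i j, w i ≠ z j) → Function.Injective z → Function.Injective w →
    (∀ S T : Finset (Fin n), S.card = T.card → S.Nonempty →
      (∏ j ∈ S, z j) ≠ ∏ j ∈ T, w j) →
    F n z w = G n z w := by
  intro n
  induction n with
  | zero =>
    intro z w _ _ _ _ _ _ _
    simp [F, G, S]
  | succ n ih =>
    intro z w hz0 hw0 hw1 hwz hinjz hinjw hST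
    have h1z : ∀ j, (1 : ℂ) - w j ≠ 0 := fun j => sub_ne_zero.mpr fun e => hw1 j e.symm
    set Z := ∏ j, z j with hZdef
    set W := ∏ j, w j with hWdef
    have hZ0 : Z ≠ 0 := Finset.prod_ne_zero_iff.mpr fun j _ => hz0 j
    have hW0 : W ≠ 0 := Finset.prod_ne_zero_iff.mpr fun j _ => hw0 j
    have hQ2 : (∏ j, ((1 : ℂ) - w j)) ≠ 0 := Finset.prod_ne_zero_iff.mpr fun j _ => h1z j
    have hZW : Z ≠ W := hST Finset.univ Finset.univ rfl Finset.univ_nonempty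
    have hZW1 : (1 : ℂ) - Z / W ≠ 0 := by
      rw [sub_ne_zero]
      intro h1
      exact hZW ((div_eq_one_iff_eq hW0).mp h1.symm)
    have hIH : ∀ p q : Fin (n + 1),
        F n (z ∘ p.succAbove) (w ∘ q.succAbove) = G n (z ∘ p.succAbove) (w ∘ q.succAbove) := by
      intro p q
      apply ih
      · exact fun j => hz0 _
      · exact fun j => hw0 _
      · exact fun j => hw1 _
      · exact fun i j => hwz _ _
      · exact hinjz.comp Fin.succAbove_right_injective
      · exact hinjw.comp Fin.succAbove_right_injective
      · intro S T hcard hne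
        have h1 : ∏ j ∈ S, (z ∘ p.succAbove) j = ∏ j ∈ S.map (Fin.succAboveEmb p), z j := by
          rw [Finset.prod_map]
          rfl
        have h2 : ∏ j ∈ T, (w ∘ q.succAbove) j = ∏ j ∈ T.map (Fin.succAboveEmb q), w j := by
          rw [Finset.prod_map]
          rfl
        rw [h1, h2]
        apply hST
        · rw [Finset.card_map, Finset.card_map, hcard]
        · exact hne.map
    set M : Matrix (Fin (n + 1)) (Fin (n + 1)) ℂ := Matrix.of fun i j => (w j - z i)⁻¹ with hM
    obtain ⟨hkey1, hkey2⟩ := key_poly z w hz0 hw0 hw1 hwz hinjw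
    have hv : ∀ i, ∑ p, M i p * vv (n + 1) z w p = (1 - z i) / z i := by
      intro i
      simpa [hM, Matrix.of_apply] using hkey1 i
    have hcof := cofactor_sum M (fun p => (1 - z p) / z p) (fun q => (1 - w q)⁻¹)
      (vv (n + 1) z w) hv
    beta_reduce at hcof
    have hterm : ∀ p q : Fin (n + 1),
        ((-1 : ℂ) ^ ((p : ℕ) + (q : ℕ))) *
          (w q * (1 - z p) / (z p * (1 - w q))) ^ (n + 1) * (1 - Z / W)⁻¹ *
          G n (z ∘ p.succAbove) (w ∘ q.succAbove) =
        (1 - Z / W)⁻¹ * (∏ j, ((1 - z j) / z j) ^ n) *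
          (∏ j, w j ^ (n + 1) * ((1 - w j) ^ n)⁻¹) *
          ((-1 : ℂ) ^ ((p : ℕ) + (q : ℕ)) * ((1 - z p) / z p) * (1 - w q)⁻¹ *
            (M.submatrix p.succAbove q.succAbove).det) := by
      intro p q
      rw [G]
      have hdet : Matrix.det (Matrix.of fun i j : Fin n =>
          ((w ∘ q.succAbove) j - (z ∘ p.succAbove) i)⁻¹) =
          (M.submatrix p.succAbove q.succAbove).det := by
        rfl
      rw [hdet]
      have e1 : (∏ j, ((1 - z j) / z j) ^ n) =
          ((1 - z p) / z p) ^ n *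
            ∏ i : Fin n, ((1 - z (p.succAbove i)) / z (p.succAbove i)) ^ n :=
        Fin.prod_univ_succAbove (fun j => ((1 - z j) / z j) ^ n) p
      have e2 : (∏ j, w j ^ (n + 1) * ((1 - w j) ^ n)⁻¹) =
          (w q ^ (n + 1) * ((1 - w q) ^ n)⁻¹) *
            ∏ i : Fin n, (w (q.succAbove i) ^ (n + 1) * ((1 - w (q.succAbove i)) ^ n)⁻¹) :=
        Fin.prod_univ_succAbove (fun j => w j ^ (n + 1) * ((1 - w j) ^ n)⁻¹) q
      have hsplit : (∏ i : Fin n, (w ∘ q.succAbove) i ^ (n + 1) * (1 - (z ∘ p.succAbove) i) ^ n /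
            ((z ∘ p.succAbove) i ^ n * (1 - (w ∘ q.succAbove) i) ^ n)) =
          (∏ i : Fin n, ((1 - z (p.succAbove i)) / z (p.succAbove i)) ^ n) *
            ∏ i : Fin n, (w (q.succAbove i) ^ (n + 1) * ((1 - w (q.succAbove i)) ^ n)⁻¹) := by
        rw [← Finset.prod_mul_distrib]
        refine Finset.prod_congr rfl fun i _ => ?_
        simp only [Function.comp_apply, div_eq_mul_inv, mul_pow, mul_inv, ← inv_pow]
        ring
      rw [hsplit, e1, e2]
      simp only [div_eq_mul_inv, mul_pow, mul_inv, ← inv_pow]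
      ring
    have hstep : ∀ p q : Fin (n + 1),
        ((-1 : ℂ) ^ ((p : ℕ) + (q : ℕ))) *
          (w q * (1 - z p) / (z p * (1 - w q))) ^ (n + 1) *
          (1 - (∏ j, z j) / (∏ j, w j))⁻¹ *
          F n (z ∘ p.succAbove) (w ∘ q.succAbove) =
        (1 - Z / W)⁻¹ * (∏ j, ((1 - z j) / z j) ^ n) *
          (∏ j, w j ^ (n + 1) * ((1 - w j) ^ n)⁻¹) *
          ((-1 : ℂ) ^ ((p : ℕ) + (q : ℕ)) * ((1 - z p) / z p) * (1 - w q)⁻¹ *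
            (M.submatrix p.succAbove q.succAbove).det) := by
      intro p q
      rw [hIH p q, ← hZdef, ← hWdef]
      exact hterm p q
    rw [F_succ z w]
    rw [Finset.sum_congr rfl fun p _ => Finset.sum_congr rfl fun q _ => hstep p q]
    simp_rw [← Finset.mul_sum]
    rw [hcof, hkey2, ← hZdef, ← hWdef, G, ← hM]
    have hpre : (1 - Z / W)⁻¹ * (∏ j, ((1 - z j) / z j) ^ n) *
        (∏ j, w j ^ (n + 1) * ((1 - w j) ^ n)⁻¹) *
        (-((1 - W / Z) * (∏ j, (1 - z j)) / ∏ j, (1 - w j))) =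
        ∏ j, w j ^ (n + 1 + 1) * (1 - z j) ^ (n + 1) / (z j ^ (n + 1) * (1 - w j) ^ (n + 1)) := by
      have hp1 : (∏ j, w j ^ (n + 1 + 1) * (1 - z j) ^ (n + 1) /
            (z j ^ (n + 1) * (1 - w j) ^ (n + 1))) =
          (∏ j, ((1 - z j) / z j) ^ n) * (∏ j, w j ^ (n + 1) * ((1 - w j) ^ n)⁻¹) *
            ∏ j, ((1 - z j) * w j * (z j)⁻¹ * (1 - w j)⁻¹) := by
        rw [← Finset.prod_mul_distrib, ← Finset.prod_mul_distrib]
        refine Finset.prod_congr rfl fun j _ => ?_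
        simp only [div_eq_mul_inv, mul_pow, mul_inv, ← inv_pow]
        ring
      have hp2 : (∏ j, ((1 - z j) * w j * (z j)⁻¹ * (1 - w j)⁻¹)) =
          (∏ j, (1 - z j)) * W * Z⁻¹ * (∏ j, (1 - w j))⁻¹ := by
        rw [Finset.prod_mul_distrib, Finset.prod_mul_distrib, Finset.prod_mul_distrib,
          Finset.prod_inv_distrib, Finset.prod_inv_distrib, ← hZdef, ← hWdef]
      rw [hp1, hp2]
      exact scalar_aux Z W (∏ j, (1 - z j)) (∏ j, (1 - w j))
        (∏ j, ((1 - z j) / z j) ^ n) (∏ j, w j ^ (n + 1) * ((1 - w j) ^ n)⁻¹)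
        hZ0 hW0 hZW1 hQ2
    linear_combination M.det * hpre

/-- converting the original (Iic / ascending power) form into the reversed form `F`. -/
theorem orig_eq_F (n : ℕ) (z w : Fin n → ℂ) :
    (∑ σ₁ : Equiv.Perm (Fin n), ∑ σ₂ : Equiv.Perm (Fin n),
        ((Equiv.Perm.sign σ₁ : ℤ) : ℂ) * ((Equiv.Perm.sign σ₂ : ℤ) : ℂ) *
          (∏ j : Fin n,
            (w (σ₂ j) * (1 - z (σ₁ j)) / (z (σ₁ j) * (1 - w (σ₂ j)))) ^ ((j : ℕ) + 1)) *
          (∏ k : Fin n,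
            (1 - (∏ j ∈ Finset.Iic k, z (σ₁ j)) / ∏ j ∈ Finset.Iic k, w (σ₂ j)))⁻¹) =
      F n z w := by
  set r : Equiv.Perm (Fin n) := Fin.revPerm with hr
  have hrapp : ∀ j : Fin n, r j = j.rev := fun j => rfl
  rw [F]
  refine Eq.trans (Equiv.sum_comp (Equiv.mulRight r) _).symm ?_
  refine Finset.sum_congr rfl fun τ₁ _ => ?_
  refine Eq.trans (Equiv.sum_comp (Equiv.mulRight r) _).symm ?_
  refine Finset.sum_congr rfl fun τ₂ _ => ?_
  simp only [Equiv.coe_mulRight, S]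
  have hsign : ((Equiv.Perm.sign (τ₁ * r) : ℤ) : ℂ) *
      ((Equiv.Perm.sign (τ₂ * r) : ℤ) : ℂ) =
      ((Equiv.Perm.sign τ₁ : ℤ) : ℂ) * ((Equiv.Perm.sign τ₂ : ℤ) : ℂ) := by
    rw [map_mul, map_mul]
    push_cast [Units.val_mul]
    rcases Int.units_eq_one_or (Equiv.Perm.sign r) with h | h <;> rw [h] <;> push_cast <;> ring
  have hb : (∏ j : Fin n, (w ((τ₂ * r) j) * (1 - z ((τ₁ * r) j)) /
        (z ((τ₁ * r) j) * (1 - w ((τ₂ * r) j)))) ^ ((j : ℕ) + 1)) =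
      ∏ j : Fin n, (w (τ₂ j) * (1 - z (τ₁ j)) / (z (τ₁ j) * (1 - w (τ₂ j)))) ^ (n - (j : ℕ)) := by
    refine Eq.trans ?_ (Equiv.prod_comp r
      (fun j => (w (τ₂ j) * (1 - z (τ₁ j)) / (z (τ₁ j) * (1 - w (τ₂ j)))) ^ (n - (j : ℕ))))
    refine Finset.prod_congr rfl fun j _ => ?_
    have hj : n - ((r j : Fin n) : ℕ) = (j : ℕ) + 1 := by
      have h1 := j.isLt
      rw [hrapp j, Fin.val_rev]
      omega
    simp only [Equiv.Perm.mul_apply, hj]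
  have hc : ∀ (u : Fin n → ℂ) (τ : Equiv.Perm (Fin n)) (k : Fin n),
      ∏ j ∈ Finset.Iic k, u ((τ * r) j) = ∏ j ∈ Finset.Ici (Fin.rev k), u (τ j) := by
    intro u τ k
    rw [← image_rev_Iic k, Finset.prod_image
      (fun a _ b _ hab => Fin.rev_injective hab)]
    refine Finset.prod_congr rfl fun j _ => ?_
    rw [Equiv.Perm.mul_apply, hrapp j]
  have hchain : (∏ k : Fin n,
        (1 - (∏ j ∈ Finset.Iic k, z ((τ₁ * r) j)) /
          ∏ j ∈ Finset.Iic k, w ((τ₂ * r) j))) =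
      ∏ k : Fin n, (1 - (∏ j ∈ Finset.Ici k, z (τ₁ j)) / ∏ j ∈ Finset.Ici k, w (τ₂ j)) := by
    refine Eq.trans ?_ (Equiv.prod_comp r
      (fun k => (1 - (∏ j ∈ Finset.Ici k, z (τ₁ j)) / ∏ j ∈ Finset.Ici k, w (τ₂ j))))
    refine Finset.prod_congr rfl fun k _ => ?_
    rw [hc z τ₁ k, hc w τ₂ k, hrapp k]
  rw [hb, hchain, hsign, Finset.prod_inv_distrib]

theorem sum_perm_zero {n : ℕ} (h : Equiv.Perm (Fin n) → ℂ) (s : Equiv.Perm (Fin n))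
    (hneg : ∀ σ, h (s * σ) = -h σ) : ∑ σ, h σ = 0 := by
  have h1 : ∑ σ, h σ = ∑ σ, h (s * σ) := (Equiv.sum_comp (Equiv.mulLeft s) h).symm
  rw [Finset.sum_congr rfl fun σ _ => hneg σ, Finset.sum_neg_distrib] at h1
  have h2 : (2 : ℂ) * ∑ σ, h σ = 0 := by linear_combination h1
  rcases mul_eq_zero.mp h2 with h3 | h3
  · norm_num at h3
  · exact h3

end

end JoSymAux

/-- The new symmetrization identity (2.10) from Johansson's paper: under the stated
non-degeneracy conditions on `z_1,…,z_n, w_1,…,w_n`,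
`∑_{σ₁,σ₂∈S_n} sgn(σ₁)sgn(σ₂) ∏_j (w_{σ₂(j)}(1-z_{σ₁(j)})/(z_{σ₁(j)}(1-w_{σ₂(j)})))^j ·
  ∏_k (1 - z_{σ₁(1)}⋯z_{σ₁(k)}/(w_{σ₂(1)}⋯w_{σ₂(k)}))⁻¹
  = (∏_j w_j^{n+1}(1-z_j)^n/(z_j^n(1-w_j)^n)) · det(1/(w_j - z_i))`. -/
theorem symmetrization_identity_two (n : ℕ) (hn : 1 ≤ n) (z w : Fin n → ℂ)
    (hz0 : ∀ j, z j ≠ 0) (hw0 : ∀ j, w j ≠ 0) (hw1 : ∀ j, w j ≠ 1)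
    (hwz : ∀ i j, w i ≠ z j)
    (hST : ∀ S T : Finset (Fin n), S.card = T.card → S.Nonempty →
      (∏ j ∈ S, z j) ≠ ∏ j ∈ T, w j) :
    (∑ σ₁ : Perm (Fin n), ∑ σ₂ : Perm (Fin n),
        ((Perm.sign σ₁ : ℤ) : ℂ) * ((Perm.sign σ₂ : ℤ) : ℂ) *
          (∏ j : Fin n,
            (w (σ₂ j) * (1 - z (σ₁ j)) / (z (σ₁ j) * (1 - w (σ₂ j)))) ^ ((j : ℕ) + 1)) *
          (∏ k : Fin n,
            (1 - (∏ j ∈ Finset.Iic k, z (σ₁ j)) / ∏ j ∈ Finset.Iic k, w (σ₂ j)))⁻¹) =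
      (∏ j : Fin n, w j ^ (n + 1) * (1 - z j) ^ n / (z j ^ n * (1 - w j) ^ n)) *
        Matrix.det (Matrix.of fun i j : Fin n => (w j - z i)⁻¹) := by
  classical
  by_cases hinjz : Function.Injective z
  · by_cases hinjw : Function.Injective w
    · rw [JoSymAux.orig_eq_F n z w,
        JoSymAux.main_lemma n z w hz0 hw0 hw1 hwz hinjz hinjw hST]
      rfl
    · obtain ⟨a, b, hab, hne⟩ : ∃ a b, w a = w b ∧ a ≠ b := by
        rw [Function.Injective] at hinjw
        push_neg at hinjw
        obtain ⟨a, b, h1, h2⟩ := hinjw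
        exact ⟨a, b, h1, h2⟩
      have hdet : Matrix.det (Matrix.of fun i j : Fin n => (w j - z i)⁻¹) = 0 := by
        apply Matrix.det_zero_of_column_eq hne
        intro k
        simp [hab]
      rw [hdet, mul_zero]
      refine Finset.sum_eq_zero fun σ₁ _ => ?_
      apply JoSymAux.sum_perm_zero _ (Equiv.swap a b)
      intro σ
      beta_reduce
      have hw' : ∀ x, w ((Equiv.swap a b * σ) x) = w (σ x) := by
        intro x
        rw [Equiv.Perm.mul_apply]
        by_cases h1 : σ x = a
        · rw [h1, Equiv.swap_apply_left, hab]
        · by_cases h2 : σ x = b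
          · rw [h2, Equiv.swap_apply_right, ← hab]
          · rw [Equiv.swap_apply_of_ne_of_ne h1 h2]
      have hsg : ((Equiv.Perm.sign (Equiv.swap a b * σ) : ℤ) : ℂ) =
          -((Equiv.Perm.sign σ : ℤ) : ℂ) := by
        rw [map_mul, Equiv.Perm.sign_swap hne]
        push_cast [Units.val_mul]
        ring
      have hprod1 : (∏ j : Fin n, (w ((Equiv.swap a b * σ) j) * (1 - z (σ₁ j)) /
            (z (σ₁ j) * (1 - w ((Equiv.swap a b * σ) j)))) ^ ((j : ℕ) + 1)) =
          ∏ j : Fin n, (w (σ j) * (1 - z (σ₁ j)) /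
            (z (σ₁ j) * (1 - w (σ j)))) ^ ((j : ℕ) + 1) :=
        Finset.prod_congr rfl fun j _ => by rw [hw' j]
      have hprod2 : (∏ k : Fin n, (1 - (∏ j ∈ Finset.Iic k, z (σ₁ j)) /
            ∏ j ∈ Finset.Iic k, w ((Equiv.swap a b * σ) j))) =
          ∏ k : Fin n, (1 - (∏ j ∈ Finset.Iic k, z (σ₁ j)) /
            ∏ j ∈ Finset.Iic k, w (σ j)) :=
        Finset.prod_congr rfl fun k _ => by rw [Finset.prod_congr rfl fun j _ => hw' j]
      rw [hprod1, hprod2, hsg]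
      ring
  · obtain ⟨a, b, hab, hne⟩ : ∃ a b, z a = z b ∧ a ≠ b := by
      rw [Function.Injective] at hinjz
      push_neg at hinjz
      obtain ⟨a, b, h1, h2⟩ := hinjz
      exact ⟨a, b, h1, h2⟩
    have hdet : Matrix.det (Matrix.of fun i j : Fin n => (w j - z i)⁻¹) = 0 := by
      apply Matrix.det_zero_of_row_eq hne
      funext k
      simp [hab]
    rw [hdet, mul_zero]
    apply JoSymAux.sum_perm_zero _ (Equiv.swap a b)
    intro σ
    beta_reduce
    have hz' : ∀ x, z ((Equiv.swap a b * σ) x) = z (σ x) := by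
      intro x
      rw [Equiv.Perm.mul_apply]
      by_cases h1 : σ x = a
      · rw [h1, Equiv.swap_apply_left, hab]
      · by_cases h2 : σ x = b
        · rw [h2, Equiv.swap_apply_right, ← hab]
        · rw [Equiv.swap_apply_of_ne_of_ne h1 h2]
    have hsg : ((Equiv.Perm.sign (Equiv.swap a b * σ) : ℤ) : ℂ) =
        -((Equiv.Perm.sign σ : ℤ) : ℂ) := by
      rw [map_mul, Equiv.Perm.sign_swap hne]
      push_cast [Units.val_mul]
      ring
    rw [← Finset.sum_neg_distrib]
    refine Finset.sum_congr rfl fun σ₂ _ => ?_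
    have hprod1 : (∏ j : Fin n, (w (σ₂ j) * (1 - z ((Equiv.swap a b * σ) j)) /
          (z ((Equiv.swap a b * σ) j) * (1 - w (σ₂ j)))) ^ ((j : ℕ) + 1)) =
        ∏ j : Fin n, (w (σ₂ j) * (1 - z (σ j)) /
          (z (σ j) * (1 - w (σ₂ j)))) ^ ((j : ℕ) + 1) :=
      Finset.prod_congr rfl fun j _ => by rw [hz' j]
    have hprod2 : (∏ k : Fin n, (1 - (∏ j ∈ Finset.Iic k, z ((Equiv.swap a b * σ) j)) /
          ∏ j ∈ Finset.Iic k, w (σ₂ j))) =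
        ∏ k : Fin n, (1 - (∏ j ∈ Finset.Iic k, z (σ j)) /
          ∏ j ∈ Finset.Iic k, w (σ₂ j)) :=
      Finset.prod_congr rfl fun k _ => by rw [Finset.prod_congr rfl fun j _ => hz' j]
    rw [hprod1, hprod2, hsg]
    ring
end

section
/- Let n ≥ 1, let a ∈ ℝ, and let z_1,…,z_n be complex numbers with Re z_j < 0 for all j. Then det( z_j^{i−1} )_{1≤i,j≤n} = (−1)^{n(n+1)/2} ( ∏_{j=1}^n z_j^n ) · ∫_{(−∞,a]^n} ∏_{j=1}^n e^{(a−x_j) z_j} · det( (x_j−a)^{i−1}/(i−1)! )_{1≤i,j≤n} d^n x, where the integral over (−∞,a]^n converges absolutely. -/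
open scoped BigOperators

open MeasureTheory

open Set Filter Asymptotics

open scoped Topology

-- check names
example (a : ℝ) : MeasurePreserving (fun x : ℝ => a - x) volume volume :=
  Measure.measurePreserving_sub_left volume a

example (a : ℝ) : MeasurableEmbedding (fun x : ℝ => a - x) :=
  (MeasurableEquiv.subLeft a).measurableEmbedding

lemma aux_tendsto {c : ℝ} (hc : c < 0) (k : ℕ) :
    Tendsto (fun x : ℝ => x ^ k * Real.exp (c * x)) atTop (𝓝 0) := by
  have h1 : Tendsto (fun x : ℝ => -c * x) atTop atTop :=
    Tendsto.const_mul_atTop (by linarith) tendsto_id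
  have h2 := (Real.tendsto_pow_mul_exp_neg_atTop_nhds_zero k).comp h1
  have h3 : Tendsto (fun x : ℝ => ((-c) ^ k)⁻¹ * ((-c * x) ^ k * Real.exp (-(-c * x))))
      atTop (𝓝 (((-c) ^ k)⁻¹ * 0)) := h2.const_mul _
  rw [mul_zero] at h3
  refine h3.congr fun x => ?_
  have hck : (-c) ^ k ≠ 0 := pow_ne_zero _ (by linarith)
  rw [mul_pow, neg_mul, neg_neg]; field_simp

lemma oneD_integrableOn_Ioi {z : ℂ} (hz : z.re < 0) (k : ℕ) :
    IntegrableOn (fun t : ℝ => (t : ℂ) ^ k * Complex.exp (t * z)) (Ioi 0) := by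
  have hb : (0 : ℝ) < -(z.re / 2) := by linarith
  -- the real bound
  have hgcont : ContinuousOn (fun t : ℝ => |t| ^ k * Real.exp (z.re * t)) (Ici 0) :=
    (((continuous_abs.pow k).mul ((continuous_const.mul continuous_id).rexp)).continuousOn)
  have htend : Tendsto (fun t : ℝ => |t| ^ k * Real.exp (z.re / 2 * t)) atTop (𝓝 0) := by
    refine (aux_tendsto (by linarith : z.re / 2 < 0) k).congr' ?_
    filter_upwards [eventually_ge_atTop (0:ℝ)] with t ht
    rw [abs_of_nonneg ht]
  have hO : (fun t : ℝ => |t| ^ k * Real.exp (z.re * t)) =O[atTop]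
      fun t : ℝ => Real.exp (-(-(z.re / 2)) * t) := by
    have h1 : (fun t : ℝ => |t| ^ k * Real.exp (z.re / 2 * t)) =O[atTop] (fun _ => (1:ℝ)) :=
      htend.isBigO_one ℝ
    have h2 := h1.mul (isBigO_refl (fun t : ℝ => Real.exp (z.re / 2 * t)) atTop)
    calc (fun t : ℝ => |t| ^ k * Real.exp (z.re * t))
        = fun t : ℝ => (|t| ^ k * Real.exp (z.re / 2 * t)) * Real.exp (z.re / 2 * t) := by
          funext t; rw [mul_assoc, ← Real.exp_add]; ring_nf
      _ =O[atTop] fun t : ℝ => (1:ℝ) * Real.exp (z.re / 2 * t) := h2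
      _ = fun t : ℝ => Real.exp (-(-(z.re / 2)) * t) := by funext t; rw [one_mul, neg_neg]
  have hgint : IntegrableOn (fun t : ℝ => |t| ^ k * Real.exp (z.re * t)) (Ioi 0) :=
    integrable_of_isBigO_exp_neg hb hgcont hO
  refine Integrable.mono' hgint ?_ ?_
  · exact (Continuous.aestronglyMeasurable (by continuity)).restrict
  · filter_upwards [] with t
    rw [norm_mul, norm_pow, Complex.norm_exp]
    simp only [Complex.norm_real, Real.norm_eq_abs, Complex.mul_re, Complex.ofReal_re,
      Complex.ofReal_im, zero_mul, sub_zero]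
    rw [mul_comm t z.re]

lemma aux_ctendsto {z : ℂ} (hz : z.re < 0) (m : ℕ) :
    Tendsto (fun t : ℝ => (t : ℂ) ^ m * Complex.exp (t * z) / z) atTop (𝓝 0) := by
  rw [tendsto_zero_iff_norm_tendsto_zero]
  have h := (aux_tendsto hz m).div_const ‖z‖
  rw [zero_div] at h
  refine h.congr' ?_
  filter_upwards [eventually_ge_atTop (0:ℝ)] with t ht
  rw [norm_div, norm_mul, norm_pow, Complex.norm_exp,
    Complex.norm_real, Real.norm_eq_abs, abs_of_nonneg ht]
  congr 2
  simp [Complex.mul_re, mul_comm]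

lemma oneD_integral_Ioi {z : ℂ} (hz : z.re < 0) : ∀ k : ℕ,
    ∫ t in Ioi (0:ℝ), (t : ℂ) ^ k * Complex.exp (t * z) =
      (-1) ^ (k + 1) * (Nat.factorial k : ℂ) / z ^ (k + 1) := by
  have hz0 : z ≠ 0 := fun h => by simp [h] at hz
  intro k
  induction k with
  | zero =>
    have h0 : ∫ t in Ioi (0:ℝ), Complex.exp ((t : ℂ) * z) =
        0 - Complex.exp (((0:ℝ) : ℂ) * z) / z := by
      refine integral_Ioi_of_hasDerivAt_of_tendsto'
        (f := fun t : ℝ => Complex.exp ((t : ℂ) * z) / z) (fun x hx => ?_) ?_ ?_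
      · have h1 : HasDerivAt (fun t : ℝ => (t : ℂ)) 1 x := Complex.ofRealCLM.hasDerivAt
        have h3 := ((h1.mul_const z).cexp).div_const z
        refine h3.congr_deriv ?_
        field_simp
      · simpa using oneD_integrableOn_Ioi hz 0
      · simpa using aux_ctendsto hz 0
    simp only [pow_zero, one_mul] at h0 ⊢
    rw [h0]
    simp [Nat.factorial]
    field_simp
  | succ k ih =>
    set C : ℂ := ((k : ℂ) + 1) / z with hC
    have hint_k := oneD_integrableOn_Ioi hz k
    have hint_k1 := oneD_integrableOn_Ioi hz (k + 1)
    have hftc : ∫ t in Ioi (0:ℝ),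
        (C * ((t : ℂ) ^ k * Complex.exp ((t : ℂ) * z)) +
          (t : ℂ) ^ (k + 1) * Complex.exp ((t : ℂ) * z)) =
        0 - ((0:ℝ) : ℂ) ^ (k + 1) * Complex.exp (((0:ℝ) : ℂ) * z) / z := by
      refine integral_Ioi_of_hasDerivAt_of_tendsto'
        (f := fun t : ℝ => (t : ℂ) ^ (k + 1) * Complex.exp ((t : ℂ) * z) / z)
        (fun x hx => ?_) ?_ ?_
      · have h1 : HasDerivAt (fun t : ℝ => (t : ℂ)) 1 x := Complex.ofRealCLM.hasDerivAt
        have h2 := (hasDerivAt_pow (k + 1) ((x : ℂ))).comp_ofReal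
        have h3 := (h1.mul_const z).cexp
        have h4 := (h2.mul h3).div_const z
        refine h4.congr_deriv ?_
        rw [hC]
        simp only [Nat.add_sub_cancel, Nat.cast_add, Nat.cast_one, mul_one]
        field_simp
      · exact (hint_k.const_mul C).add hint_k1
      · exact aux_ctendsto hz (k + 1)
    rw [integral_add (hint_k.const_mul C) hint_k1, integral_const_mul, ih] at hftc
    have h5 : (∫ t in Ioi (0:ℝ), (t : ℂ) ^ (k + 1) * Complex.exp ((t : ℂ) * z)) =
        -(C * ((-1) ^ (k + 1) * (Nat.factorial k : ℂ) / z ^ (k + 1))) := by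
      rw [eq_neg_iff_add_eq_zero, add_comm]
      rw [hftc]
      simp
    rw [h5, hC]
    rw [Nat.factorial_succ]
    push_cast
    field_simp
    ring

lemma oneD_Iic (a : ℝ) {z : ℂ} (hz : z.re < 0) (k : ℕ) :
    IntegrableOn (fun x : ℝ => Complex.exp (((a : ℂ) - x) * z) * ((x : ℂ) - a) ^ k) (Iic a) ∧
    ∫ x in Iic a, Complex.exp (((a : ℂ) - x) * z) * ((x : ℂ) - a) ^ k =
      -(Nat.factorial k : ℂ) / z ^ (k + 1) := by
  have hmp : MeasurePreserving (fun x : ℝ => a - x) volume volume :=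
    Measure.measurePreserving_sub_left volume a
  have hemb : MeasurableEmbedding (fun x : ℝ => a - x) :=
    (MeasurableEquiv.subLeft a).measurableEmbedding
  have hpre : (fun x : ℝ => a - x) ⁻¹' (Ici 0) = Iic a := by
    ext x; simp [sub_nonneg]
  have hF : IntegrableOn (fun t : ℝ => (t : ℂ) ^ k * Complex.exp (t * z)) (Ici 0) := by
    rw [integrableOn_Ici_iff_integrableOn_Ioi]
    exact oneD_integrableOn_Ioi hz k
  have key : ∀ x : ℝ, Complex.exp (((a : ℂ) - x) * z) * ((x : ℂ) - a) ^ k =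
      (-1 : ℂ) ^ k * ((((a - x : ℝ) : ℂ)) ^ k * Complex.exp (((a - x : ℝ) : ℂ) * z)) := by
    intro x
    push_cast
    rw [show ((x : ℂ) - a) = -((a : ℂ) - x) by ring, neg_pow]
    ring
  constructor
  · have h1 : IntegrableOn
        (fun x : ℝ => (((a - x : ℝ) : ℂ)) ^ k * Complex.exp (((a - x : ℝ) : ℂ) * z)) (Iic a) := by
      rw [← hpre]
      exact (hmp.integrableOn_comp_preimage hemb (f := fun t : ℝ => (t : ℂ) ^ k * Complex.exp (t * z)) (s := Ici 0)).mpr hF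
    have h2 : IntegrableOn (fun x : ℝ => (-1 : ℂ) ^ k *
        ((((a - x : ℝ) : ℂ)) ^ k * Complex.exp (((a - x : ℝ) : ℂ) * z))) (Iic a) :=
      h1.const_mul _
    exact h2.congr_fun (fun x _ => (key x).symm) measurableSet_Iic
  · calc ∫ x in Iic a, Complex.exp (((a : ℂ) - x) * z) * ((x : ℂ) - a) ^ k
        = ∫ x in Iic a, (-1 : ℂ) ^ k *
            ((((a - x : ℝ) : ℂ)) ^ k * Complex.exp (((a - x : ℝ) : ℂ) * z)) := by
          exact setIntegral_congr_fun measurableSet_Iic fun x _ => key x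
      _ = (-1 : ℂ) ^ k * ∫ x in Iic a,
            (((a - x : ℝ) : ℂ)) ^ k * Complex.exp (((a - x : ℝ) : ℂ) * z) := integral_const_mul _ _
      _ = (-1 : ℂ) ^ k * ∫ t in Ici (0:ℝ), (t : ℂ) ^ k * Complex.exp (t * z) := by
          rw [← hpre, hmp.setIntegral_preimage_emb hemb (fun t : ℝ => (t : ℂ) ^ k * Complex.exp (t * z)) (Ici 0)]
      _ = (-1 : ℂ) ^ k * ((-1) ^ (k + 1) * (Nat.factorial k : ℂ) / z ^ (k + 1)) := by
          rw [integral_Ici_eq_integral_Ioi, oneD_integral_Ioi hz k]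
      _ = -(Nat.factorial k : ℂ) / z ^ (k + 1) := by
          have h2 : ((-1 : ℂ)) ^ k * (-1) ^ (k + 1) = -1 := by
            rw [pow_succ, ← mul_assoc, ← mul_pow]; norm_num
          rw [show ((-1 : ℂ)) ^ k * ((-1) ^ (k + 1) * (Nat.factorial k : ℂ) / z ^ (k + 1)) =
            ((-1 : ℂ)) ^ k * (-1) ^ (k + 1) * (Nat.factorial k : ℂ) / z ^ (k + 1) by ring, h2]
          ring

lemma my_restrict_pi_pi {n : ℕ} (μ : Measure ℝ) [SigmaFinite μ] (s : Fin n → Set ℝ)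
    (hs : ∀ i, MeasurableSet (s i)) :
    (Measure.pi fun _ : Fin n => μ).restrict (Set.univ.pi s) =
      Measure.pi fun i => μ.restrict (s i) := by
  refine (Measure.pi_eq fun t ht => ?_).symm
  rw [Measure.restrict_apply (MeasurableSet.univ_pi ht), ← Set.pi_inter_distrib,
    Measure.pi_pi]
  exact Finset.prod_congr rfl fun i _ => (Measure.restrict_apply (ht i)).symm

lemma my_pi_integrable {n : ℕ} (μ : Measure ℝ) [SigmaFinite μ] (f : Fin n → ℝ → ℂ)
    (hf : ∀ i, Integrable (f i) μ) :
    Integrable (fun x : Fin n → ℝ => ∏ i, f i (x i)) (Measure.pi fun _ : Fin n => μ) := by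
  letI : MeasureSpace ℝ := ⟨μ⟩
  haveI : SigmaFinite (volume : Measure ℝ) := inferInstanceAs (SigmaFinite μ)
  exact Integrable.fintype_prod hf

lemma my_pi_integral {n : ℕ} (μ : Measure ℝ) [SigmaFinite μ] (f : Fin n → ℝ → ℂ) :
    ∫ x : Fin n → ℝ, ∏ i, f i (x i) ∂(Measure.pi fun _ : Fin n => μ) =
      ∏ i, ∫ x, f i x ∂μ := by
  letI : MeasureSpace ℝ := ⟨μ⟩
  haveI : SigmaFinite (volume : Measure ℝ) := inferInstanceAs (SigmaFinite μ)
  exact integral_fintype_prod_eq_prod f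

lemma my_pairs_prod {n : ℕ} (w : Fin n → ℂ) :
    ∏ i : Fin n, ∏ j ∈ Finset.Ioi i, (w i * w j) = ∏ j : Fin n, w j ^ (n - 1) := by
  have hsplit : ∏ i : Fin n, ∏ j ∈ Finset.Ioi i, (w i * w j) =
      (∏ i : Fin n, ∏ _j ∈ Finset.Ioi i, w i) * ∏ i : Fin n, ∏ j ∈ Finset.Ioi i, w j := by
    rw [← Finset.prod_mul_distrib]
    exact Finset.prod_congr rfl fun i _ => Finset.prod_mul_distrib
  rw [hsplit]
  have h1 : ∏ i : Fin n, ∏ _j ∈ Finset.Ioi i, w i = ∏ i : Fin n, w i ^ (n - 1 - (i : ℕ)) := by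
    refine Finset.prod_congr rfl fun i _ => ?_
    rw [Finset.prod_const, Fin.card_Ioi]
  have h2 : ∏ i : Fin n, ∏ j ∈ Finset.Ioi i, w j = ∏ j : Fin n, w j ^ (j : ℕ) := by
    rw [Finset.prod_comm' (t' := Finset.univ) (s' := fun j => Finset.Iio j)
      (fun x y => by simp [Finset.mem_Ioi, Finset.mem_Iio])]
    refine Finset.prod_congr rfl fun j _ => ?_
    rw [Finset.prod_const, Fin.card_Iio]
  rw [h1, h2, ← Finset.prod_mul_distrib]
  refine Finset.prod_congr rfl fun j _ => ?_
  rw [← pow_add]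
  congr 1
  have := j.isLt
  omega

lemma my_K (n : ℕ) : ∑ i : Fin n, (Finset.Ioi i).card = n * (n - 1) / 2 := by
  simp only [Fin.card_Ioi]
  rw [Fin.sum_univ_eq_sum_range (fun i => n - 1 - i) n,
    Finset.sum_range_reflect (fun j => j) n, Finset.sum_range_id]

lemma my_sign (n : ℕ) :
    (-1 : ℂ) ^ (n * (n + 1) / 2) * ((-1) ^ n * (-1) ^ (n * (n - 1) / 2)) = 1 := by
  have h1 : n * (n + 1) = n * (n - 1) + n * 2 := by
    cases n with
    | zero => rfl
    | succ m => simp [Nat.succ_sub_one]; ring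
  have h : n * (n + 1) / 2 = n * (n - 1) / 2 + n := by
    rw [h1, Nat.add_mul_div_right _ _ two_pos]
  rw [h, pow_add]
  have h2 : (-1 : ℂ) ^ (n * (n - 1) / 2) * (-1) ^ n * ((-1) ^ n * (-1) ^ (n * (n - 1) / 2)) =
      (((-1 : ℂ) ^ (n * (n - 1) / 2)) ^ 2) * (((-1 : ℂ) ^ n) ^ 2) := by ring
  rw [h2, ← pow_mul, ← pow_mul, mul_comm _ 2, mul_comm _ 2, pow_mul, pow_mul, neg_one_sq,
    one_pow, one_pow, one_mul]

noncomputable def hFun (a : ℝ) (z : ℂ) (m : ℕ) (x : ℝ) : ℂ :=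
  Complex.exp (((a : ℂ) - x) * z) * (((x : ℂ) - a) ^ m / (Nat.factorial m : ℂ))

lemma hFun_integrable (a : ℝ) {z : ℂ} (hz : z.re < 0) (m : ℕ) :
    Integrable (hFun a z m) ((volume : Measure ℝ).restrict (Iic a)) := by
  have := ((oneD_Iic a hz m).1).div_const (Nat.factorial m : ℂ)
  refine this.congr (ae_of_all _ fun x => ?_)
  simp only [hFun, mul_div_assoc]

lemma hFun_integral (a : ℝ) {z : ℂ} (hz : z.re < 0) (m : ℕ) :
    ∫ x, hFun a z m x ∂((volume : Measure ℝ).restrict (Iic a)) = -(z ^ (m + 1))⁻¹ := by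
  have hm : (Nat.factorial m : ℂ) ≠ 0 := Nat.cast_ne_zero.mpr (Nat.factorial_ne_zero m)
  have hz0 : z ≠ 0 := fun h => by simp [h] at hz
  calc ∫ x, hFun a z m x ∂((volume : Measure ℝ).restrict (Iic a))
      = (∫ x in Iic a, Complex.exp (((a : ℂ) - x) * z) * ((x : ℂ) - a) ^ m) /
          (Nat.factorial m : ℂ) := by
        rw [← integral_div]
        refine integral_congr_ae (ae_of_all _ fun x => ?_)
        simp only [hFun, mul_div_assoc]
    _ = -(z ^ (m + 1))⁻¹ := by
        rw [(oneD_Iic a hz m).2]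
        field_simp

/-- Identity (3.2): for `Re z_j < 0` and any `a ∈ ℝ`,
`det(z_j^{i-1}) = (-1)^{n(n+1)/2} (∏_j z_j^n) ∫_{(-∞,a]^n} ∏_j e^{(a-x_j)z_j}
 det((x_j-a)^{i-1}/(i-1)!) dⁿx`, the integral converging absolutely. -/
theorem vandermonde_integral_representation (n : ℕ) (hn : 1 ≤ n) (a : ℝ)
    (z : Fin n → ℂ) (hz : ∀ j, (z j).re < 0) :
    IntegrableOn
      (fun x : Fin n → ℝ =>
        (∏ j : Fin n, Complex.exp (((a : ℂ) - (x j : ℂ)) * z j)) *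
          Matrix.det (Matrix.of fun i j : Fin n =>
            ((x j : ℂ) - (a : ℂ)) ^ (i : ℕ) / (Nat.factorial (i : ℕ) : ℂ)))
      (Set.univ.pi fun _ : Fin n => Set.Iic a) volume ∧
    Matrix.det (Matrix.of fun i j : Fin n => z j ^ (i : ℕ)) =
      (-1 : ℂ) ^ (n * (n + 1) / 2) * (∏ j : Fin n, z j ^ n) *
        ∫ x in Set.univ.pi fun _ : Fin n => Set.Iic a,
          (∏ j : Fin n, Complex.exp (((a : ℂ) - (x j : ℂ)) * z j)) *
            Matrix.det (Matrix.of fun i j : Fin n =>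
              ((x j : ℂ) - (a : ℂ)) ^ (i : ℕ) / (Nat.factorial (i : ℕ) : ℂ)) := by
  classical
  have hznz : ∀ j, z j ≠ 0 := fun j h => by simpa [h] using (hz j)
  set S : Set (Fin n → ℝ) := Set.univ.pi fun _ : Fin n => Set.Iic a with hS
  have hvol : (volume : Measure (Fin n → ℝ)).restrict S =
      Measure.pi fun _ : Fin n => (volume : Measure ℝ).restrict (Iic a) := by
    rw [hS, volume_pi, my_restrict_pi_pi _ _ (fun _ => measurableSet_Iic)]
  -- pointwise expansion of the integrand
  have hexpand : ∀ x : Fin n → ℝ,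
      (∏ j : Fin n, Complex.exp (((a : ℂ) - (x j : ℂ)) * z j)) *
        Matrix.det (Matrix.of fun i j : Fin n =>
          ((x j : ℂ) - (a : ℂ)) ^ (i : ℕ) / (Nat.factorial (i : ℕ) : ℂ)) =
      ∑ σ : Equiv.Perm (Fin n), ((Equiv.Perm.sign σ : ℤ) : ℂ) *
        ∏ j : Fin n, hFun a (z j) (σ j) (x j) := by
    intro x
    rw [Matrix.det_apply', Finset.mul_sum]
    refine Finset.sum_congr rfl fun σ _ => ?_
    have : ∏ j : Fin n, hFun a (z j) (σ j) (x j) =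
        (∏ j : Fin n, Complex.exp (((a : ℂ) - (x j : ℂ)) * z j)) *
          ∏ j : Fin n, ((x j : ℂ) - (a : ℂ)) ^ (σ j : ℕ) / (Nat.factorial (σ j : ℕ) : ℂ) := by
      rw [← Finset.prod_mul_distrib]
      exact Finset.prod_congr rfl fun j _ => rfl
    rw [this]
    simp only [Matrix.of_apply]
    ring
  -- integrability of each permutation term
  have hterm : ∀ σ : Equiv.Perm (Fin n),
      Integrable (fun x : Fin n → ℝ => ∏ j : Fin n, hFun a (z j) (σ j) (x j))
        ((volume : Measure (Fin n → ℝ)).restrict S) := by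
    intro σ
    rw [hvol]
    exact my_pi_integrable _ _ fun j => hFun_integrable a (hz j) (σ j)
  have hInt : IntegrableOn
      (fun x : Fin n → ℝ =>
        (∏ j : Fin n, Complex.exp (((a : ℂ) - (x j : ℂ)) * z j)) *
          Matrix.det (Matrix.of fun i j : Fin n =>
            ((x j : ℂ) - (a : ℂ)) ^ (i : ℕ) / (Nat.factorial (i : ℕ) : ℂ))) S volume := by
    rw [IntegrableOn, funext hexpand]
    exact integrable_finset_sum _ fun σ _ => (hterm σ).const_mul _
  refine ⟨hInt, ?_⟩
  -- value of the integral
  have hIval : (∫ x in S,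
      (∏ j : Fin n, Complex.exp (((a : ℂ) - (x j : ℂ)) * z j)) *
        Matrix.det (Matrix.of fun i j : Fin n =>
          ((x j : ℂ) - (a : ℂ)) ^ (i : ℕ) / (Nat.factorial (i : ℕ) : ℂ))) =
      ∑ σ : Equiv.Perm (Fin n), ((Equiv.Perm.sign σ : ℤ) : ℂ) *
        ∏ j : Fin n, -((z j ^ ((σ j : ℕ) + 1))⁻¹) := by
    rw [integral_congr_ae (ae_of_all _ hexpand),
      integral_finset_sum _ fun σ _ => (hterm σ).const_mul _]
    refine Finset.sum_congr rfl fun σ _ => ?_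
    rw [integral_const_mul]
    congr 1
    rw [hvol, my_pi_integral]
    exact Finset.prod_congr rfl fun j _ => hFun_integral a (hz j) (σ j)
  rw [hIval]
  -- algebra
  set w : Fin n → ℂ := fun j => (z j)⁻¹ with hw
  have hprodterm : ∀ σ : Equiv.Perm (Fin n),
      ∏ j : Fin n, -((z j ^ ((σ j : ℕ) + 1))⁻¹) =
        (-1 : ℂ) ^ n * (∏ j : Fin n, w j) * ∏ j : Fin n, w j ^ (σ j : ℕ) := by
    intro σ
    calc ∏ j : Fin n, -((z j ^ ((σ j : ℕ) + 1))⁻¹)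
        = ∏ j : Fin n, (-1 : ℂ) * (w j * w j ^ (σ j : ℕ)) := by
          refine Finset.prod_congr rfl fun j _ => ?_
          rw [hw, ← inv_pow, pow_succ]
          ring
      _ = (-1 : ℂ) ^ n * (∏ j : Fin n, w j) * ∏ j : Fin n, w j ^ (σ j : ℕ) := by
          rw [Finset.prod_mul_distrib, Finset.prod_mul_distrib, Finset.prod_const,
            Finset.card_univ, Fintype.card_fin, mul_assoc]
  have hsum : ∑ σ : Equiv.Perm (Fin n), ((Equiv.Perm.sign σ : ℤ) : ℂ) *
      ∏ j : Fin n, -((z j ^ ((σ j : ℕ) + 1))⁻¹) =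
      (-1 : ℂ) ^ n * (∏ j : Fin n, w j) *
        Matrix.det (Matrix.of fun i j : Fin n => w j ^ (i : ℕ)) := by
    rw [Matrix.det_apply', Finset.mul_sum]
    refine Finset.sum_congr rfl fun σ _ => ?_
    rw [hprodterm σ]
    simp only [Matrix.of_apply]
    ring
  rw [hsum]
  -- both determinants via Vandermonde
  have hdet1 : Matrix.det (Matrix.of fun i j : Fin n => z j ^ (i : ℕ)) =
      ∏ i : Fin n, ∏ j ∈ Finset.Ioi i, (z j - z i) := by
    have h : (Matrix.of fun i j : Fin n => z j ^ (i : ℕ)) =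
        (Matrix.vandermonde z).transpose := rfl
    rw [h, Matrix.det_transpose, Matrix.det_vandermonde]
  have hdet2 : Matrix.det (Matrix.of fun i j : Fin n => w j ^ (i : ℕ)) =
      ∏ i : Fin n, ∏ j ∈ Finset.Ioi i, (w j - w i) := by
    have h : (Matrix.of fun i j : Fin n => w j ^ (i : ℕ)) =
        (Matrix.vandermonde w).transpose := rfl
    rw [h, Matrix.det_transpose, Matrix.det_vandermonde]
  rw [hdet1, hdet2]
  -- transform the product over pairs
  have hQ : ∏ i : Fin n, ∏ j ∈ Finset.Ioi i, (w j - w i) =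
      (-1 : ℂ) ^ (n * (n - 1) / 2) * (∏ i : Fin n, ∏ j ∈ Finset.Ioi i, (z j - z i)) *
        ∏ j : Fin n, w j ^ (n - 1) := by
    have hfact : ∀ i j : Fin n, w j - w i = (-1 : ℂ) * (z j - z i) * (w i * w j) := by
      intro i j
      rw [hw]
      field_simp [hznz i, hznz j]
      ring_nf
    calc ∏ i : Fin n, ∏ j ∈ Finset.Ioi i, (w j - w i)
        = ∏ i : Fin n, ∏ j ∈ Finset.Ioi i, ((-1 : ℂ) * (z j - z i) * (w i * w j)) :=
          Finset.prod_congr rfl fun i _ => Finset.prod_congr rfl fun j _ => hfact i j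
      _ = (∏ i : Fin n, ∏ _j ∈ Finset.Ioi i, (-1 : ℂ)) *
            (∏ i : Fin n, ∏ j ∈ Finset.Ioi i, (z j - z i)) *
            ∏ i : Fin n, ∏ j ∈ Finset.Ioi i, (w i * w j) := by
          rw [← Finset.prod_mul_distrib, ← Finset.prod_mul_distrib]
          refine Finset.prod_congr rfl fun i _ => ?_
          rw [← Finset.prod_mul_distrib, ← Finset.prod_mul_distrib]
      _ = (-1 : ℂ) ^ (n * (n - 1) / 2) *
            (∏ i : Fin n, ∏ j ∈ Finset.Ioi i, (z j - z i)) *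
            ∏ j : Fin n, w j ^ (n - 1) := by
          rw [my_pairs_prod]
          congr 2
          rw [Finset.prod_congr rfl fun (i : Fin n) _ => Finset.prod_const (-1 : ℂ),
            Finset.prod_pow_eq_pow_sum, my_K]
  rw [hQ]
  have hcast : (∏ j : Fin n, z j ^ n) * ((∏ j : Fin n, w j) * ∏ j : Fin n, w j ^ (n - 1)) = 1 := by
    rw [← Finset.prod_mul_distrib, ← Finset.prod_mul_distrib]
    refine Finset.prod_eq_one fun j _ => ?_
    have h1 : w j * w j ^ (n - 1) = w j ^ n := by
      rw [← pow_succ']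
      congr 1
      omega
    rw [h1]
    simp only [hw]
    rw [← mul_pow, mul_inv_cancel₀ (hznz j), one_pow]
  have key : ∀ P : ℂ,
      (-1 : ℂ) ^ (n * (n + 1) / 2) * (∏ j : Fin n, z j ^ n) *
        ((-1 : ℂ) ^ n * (∏ j : Fin n, w j) *
          ((-1 : ℂ) ^ (n * (n - 1) / 2) * P * ∏ j : Fin n, w j ^ (n - 1))) = P := by
    intro P
    calc (-1 : ℂ) ^ (n * (n + 1) / 2) * (∏ j : Fin n, z j ^ n) *
        ((-1 : ℂ) ^ n * (∏ j : Fin n, w j) *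
          ((-1 : ℂ) ^ (n * (n - 1) / 2) * P * ∏ j : Fin n, w j ^ (n - 1)))
        = ((-1 : ℂ) ^ (n * (n + 1) / 2) * ((-1 : ℂ) ^ n * (-1 : ℂ) ^ (n * (n - 1) / 2))) *
          ((∏ j : Fin n, z j ^ n) * ((∏ j : Fin n, w j) * ∏ j : Fin n, w j ^ (n - 1))) * P := by
          ring
      _ = P := by rw [my_sign n, hcast, one_mul, one_mul]
  exact (key _).symm
end

section
/- Let n ≥ 1, let μ > 0, τ > 0, and let x_1,…,x_n ∈ ℝ. Then det( x_j^{i−1}/(i−1)! )_{1≤i,j≤n} = (2πi)^{−n} ∮_{γ_τ} ⋯ ∮_{γ_τ} ∏_{j=1}^n e^{x_j ζ_j − (1/2)μ ζ_j^2} · det( ζ_j^{−i} )_{1≤i,j≤n} dζ_1 ⋯ dζ_n. -/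
open scoped BigOperators Real
open MeasureTheory Complex Finset
open scoped NNReal ENNReal

/-- The iterated contour integral `∮_{γ_{ρ_1}} ⋯ ∮_{γ_{ρ_n}} f(z_1,…,z_n) dz_n ⋯ dz_1`
over positively oriented circles `γ_{ρ_j}` of radius `ρ j` centred at the origin,
written as an integral over the angles `θ ∈ [0,2π]^n`. -/
noncomputable def circlesIntegral {n : ℕ} (ρ : Fin n → ℝ) (f : (Fin n → ℂ) → ℂ) : ℂ :=
  ∫ θ in Set.univ.pi fun _ : Fin n => Set.Ioc (0 : ℝ) (2 * π),
    (∏ j : Fin n, Complex.I * (ρ j : ℂ) * Complex.exp (Complex.I * (θ j : ℂ))) *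
      f fun j => (ρ j : ℂ) * Complex.exp (Complex.I * (θ j : ℂ))

noncomputable section HermiteContourAux
namespace HermiteContourAux

/-- Taylor coefficients of `exp (c z ^ 2)`. -/
def gcoef (c : ℂ) (j : ℕ) : ℂ :=
  if Even j then c ^ (j / 2) / ((j / 2).factorial : ℂ) else 0

/-- Taylor coefficients of `exp (x z + c z ^ 2)`. -/
def acoef (c x : ℂ) (i : ℕ) : ℂ :=
  ∑ p ∈ Finset.HasAntidiagonal.antidiagonal i, x ^ p.1 / (p.1.factorial : ℂ) * gcoef c p.2

lemma gcoef_zero (c : ℂ) : gcoef c 0 = 1 := by simp [gcoef]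

lemma hasSum_exp_gen (w : ℂ) : HasSum (fun m : ℕ => w ^ m / m.factorial) (Complex.exp w) := by
  rw [Complex.exp_eq_exp_ℂ]
  exact NormedSpace.expSeries_div_hasSum_exp w

lemma summable_norm_exp_gen (w : ℂ) : Summable (fun m : ℕ => ‖w ^ m / (m.factorial : ℂ)‖) := by
  have : (fun m : ℕ => ‖w ^ m / (m.factorial : ℂ)‖) = fun m => ‖w‖ ^ m / m.factorial := by
    funext m
    simp [norm_div, norm_pow]
  rw [this]
  exact Real.summable_pow_div_factorial ‖w‖

lemma not_even_off_range {j : ℕ} (hj : j ∉ Set.range (fun k : ℕ => 2 * k)) : ¬ Even j := by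
  rintro ⟨r, rfl⟩
  exact hj ⟨r, by show 2 * r = r + r; omega⟩

lemma hasSum_gcoef (c y : ℂ) :
    HasSum (fun j => gcoef c j * y ^ j) (Complex.exp (c * y ^ 2)) := by
  have hinj : Function.Injective (fun k : ℕ => 2 * k) := fun a b h =>
    Nat.eq_of_mul_eq_mul_left two_pos h
  have h0 : ∀ j ∉ Set.range (fun k : ℕ => 2 * k), gcoef c j * y ^ j = 0 := by
    intro j hj
    simp [gcoef, not_even_off_range hj]
  rw [← hinj.hasSum_iff h0]
  have : ((fun j => gcoef c j * y ^ j) ∘ fun k : ℕ => 2 * k)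
      = fun k : ℕ => (c * y ^ 2) ^ k / k.factorial := by
    funext k
    have h2 : Even (2 * k) := ⟨k, by omega⟩
    have h3 : 2 * k / 2 = k := by omega
    simp only [Function.comp, gcoef, if_pos h2, h3, mul_pow, ← pow_mul]
    ring
  rw [this]
  exact hasSum_exp_gen _

lemma summable_norm_gcoef (c y : ℂ) : Summable (fun j => ‖gcoef c j * y ^ j‖) := by
  have hinj : Function.Injective (fun k : ℕ => 2 * k) := fun a b h =>
    Nat.eq_of_mul_eq_mul_left two_pos h
  have h0 : ∀ j ∉ Set.range (fun k : ℕ => 2 * k), ‖gcoef c j * y ^ j‖ = 0 := by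
    intro j hj
    simp [gcoef, not_even_off_range hj]
  rw [← hinj.summable_iff h0]
  have : ((fun j => ‖gcoef c j * y ^ j‖) ∘ fun k : ℕ => 2 * k)
      = fun k : ℕ => ‖(c * y ^ 2) ^ k / (k.factorial : ℂ)‖ := by
    funext k
    have h2 : Even (2 * k) := ⟨k, by omega⟩
    have h3 : 2 * k / 2 = k := by omega
    simp only [Function.comp, gcoef, if_pos h2, h3, mul_pow, ← pow_mul]
    congr 1
    ring
  rw [this]
  exact summable_norm_exp_gen _

lemma hasSum_ucoef (x y : ℂ) :
    HasSum (fun m : ℕ => x ^ m / m.factorial * y ^ m) (Complex.exp (x * y)) := by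
  have h := hasSum_exp_gen (x * y)
  have : (fun m : ℕ => x ^ m / (m.factorial : ℂ) * y ^ m)
      = fun m : ℕ => (x * y) ^ m / m.factorial := by
    funext m; rw [mul_pow]; ring
  rw [this]
  exact h

lemma summable_norm_ucoef (x y : ℂ) :
    Summable (fun m : ℕ => ‖x ^ m / (m.factorial : ℂ) * y ^ m‖) := by
  have : (fun m : ℕ => ‖x ^ m / (m.factorial : ℂ) * y ^ m‖)
      = fun m : ℕ => ‖(x * y) ^ m / (m.factorial : ℂ)‖ := by
    funext m; rw [mul_pow]; congr 1; ring
  rw [this]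
  exact summable_norm_exp_gen _

lemma hasSum_acoef (c x y : ℂ) :
    HasSum (fun n => acoef c x n * y ^ n) (Complex.exp (x * y + c * y ^ 2)) := by
  have hnu := summable_norm_ucoef x y
  have hnv := summable_norm_gcoef c y
  have hw := summable_norm_sum_mul_antidiagonal_of_summable_norm hnu hnv
  have hws := hw.of_norm
  have htsum := tsum_mul_tsum_eq_tsum_sum_antidiagonal_of_summable_norm hnu hnv
  rw [(hasSum_ucoef x y).tsum_eq, (hasSum_gcoef c y).tsum_eq] at htsum
  have heq : (fun n => ∑ p ∈ Finset.HasAntidiagonal.antidiagonal n,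
      (x ^ p.1 / (p.1.factorial : ℂ) * y ^ p.1) * (gcoef c p.2 * y ^ p.2))
      = fun n => acoef c x n * y ^ n := by
    funext n
    rw [acoef, Finset.sum_mul]
    refine Finset.sum_congr rfl fun p hp => ?_
    have hpn : p.1 + p.2 = n := Finset.HasAntidiagonal.mem_antidiagonal.mp hp
    rw [← hpn, pow_add]
    ring
  rw [heq] at hws htsum
  rw [Complex.exp_add, htsum]
  exact hws.hasSum

lemma summable_norm_acoef (c x : ℂ) : Summable fun n => ‖acoef c x n‖ := by
  have hnu := summable_norm_ucoef x 1
  have hnv := summable_norm_gcoef c 1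
  have hw := summable_norm_sum_mul_antidiagonal_of_summable_norm hnu hnv
  have heq : (fun n => ‖∑ p ∈ Finset.HasAntidiagonal.antidiagonal n,
      (x ^ p.1 / (p.1.factorial : ℂ) * 1 ^ p.1) * (gcoef c p.2 * 1 ^ p.2)‖)
      = fun n => ‖acoef c x n‖ := by
    funext n
    simp [acoef]
  rwa [heq] at hw


lemma ofScalars_coeff (a : ℕ → ℂ) (k : ℕ) :
    (FormalMultilinearSeries.ofScalars ℂ a).coeff k = a k := by
  show (FormalMultilinearSeries.ofScalars ℂ a) k 1 = a k
  have h : (1 : Fin k → ℂ) = fun _ => (1 : ℂ) := rfl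
  rw [h, FormalMultilinearSeries.ofScalars_apply_eq]
  simp

lemma hasFPowerSeriesAt_f (c x : ℂ) :
    HasFPowerSeriesAt (fun z => Complex.exp (x * z + c * z ^ 2))
      (FormalMultilinearSeries.ofScalars ℂ (acoef c x)) 0 := by
  refine ⟨1, ?_, one_pos, ?_⟩
  · have : ((1 : ℝ≥0) : ℝ≥0∞) ≤ (FormalMultilinearSeries.ofScalars ℂ (acoef c x)).radius := by
      apply FormalMultilinearSeries.le_radius_of_summable
      have h : ∀ n, ‖FormalMultilinearSeries.ofScalars ℂ (acoef c x) n‖ = ‖acoef c x n‖ :=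
        fun n => FormalMultilinearSeries.ofScalars_norm _ _ n
      simp only [h, NNReal.coe_one, one_pow, mul_one]
      exact summable_norm_acoef c x
    simpa using this
  · intro y _
    simp only [FormalMultilinearSeries.ofScalars_apply_eq, smul_eq_mul, zero_add]
    exact hasSum_acoef c x y

lemma differentiable_f (c x : ℂ) :
    Differentiable ℂ (fun z => Complex.exp (x * z + c * z ^ 2)) := by
  apply Differentiable.cexp
  fun_prop

lemma cauchy_coeff (c x : ℂ) {τ : ℝ} (hτ : 0 < τ) (k : ℕ) :
    (cauchyPowerSeries (fun z => Complex.exp (x * z + c * z ^ 2)) 0 τ).coeff k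
      = acoef c x k := by
  have hR : (0 : ℝ≥0) < τ.toNNReal := Real.toNNReal_pos.mpr hτ
  have hball := ((differentiable_f c x).hasFPowerSeriesOnBall 0 hR).hasFPowerSeriesAt
  rw [Real.coe_toNNReal τ hτ.le] at hball
  have heq := hball.eq_formalMultilinearSeries (hasFPowerSeriesAt_f c x)
  rw [heq, ofScalars_coeff]

lemma circleIntegral_eq (c x : ℂ) {τ : ℝ} (hτ : 0 < τ) (k : ℕ) :
    (∮ z in C(0, τ), z ^ (-((k : ℕ) + 1) : ℤ) * Complex.exp (x * z + c * z ^ 2))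
      = 2 * (π : ℂ) * Complex.I * acoef c x k := by
  have happ : (cauchyPowerSeries (fun z => Complex.exp (x * z + c * z ^ 2)) 0 τ).coeff k
      = (2 * (π : ℂ) * Complex.I)⁻¹ •
        ∮ z in C(0, τ), (1 / (z - 0)) ^ k • (z - 0)⁻¹ •
          Complex.exp (x * z + c * z ^ 2) :=
    cauchyPowerSeries_apply _ 0 τ k 1
  have hfun : (fun z : ℂ => (1 / (z - 0)) ^ k • (z - 0)⁻¹ •
        Complex.exp (x * z + c * z ^ 2))
      = fun z : ℂ => z ^ (-((k : ℕ) + 1) : ℤ) * Complex.exp (x * z + c * z ^ 2) := by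
    funext z
    have : (-((k : ℕ) + 1) : ℤ) = Int.negSucc k := by
      simp [Int.negSucc_eq]
    rw [this, zpow_negSucc]
    simp only [sub_zero, smul_eq_mul, one_div, inv_pow, pow_succ, mul_inv]
    ring
  rw [hfun] at happ
  rw [cauchy_coeff c x hτ k] at happ
  rw [happ, smul_eq_mul, ← mul_assoc, mul_inv_cancel₀ Complex.two_pi_I_ne_zero, one_mul]


lemma integral_Ioc_eq_circleIntegral {τ : ℝ} (hτ : 0 < τ) (G : ℂ → ℂ) :
    (∫ t in Set.Ioc (0 : ℝ) (2 * π),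
        Complex.I * (τ : ℂ) * Complex.exp (Complex.I * (t : ℂ)) *
          G ((τ : ℂ) * Complex.exp (Complex.I * (t : ℂ))))
      = ∮ z in C(0, τ), G z := by
  rw [circleIntegral, ← intervalIntegral.integral_of_le Real.two_pi_pos.le]
  refine intervalIntegral.integral_congr fun θ _ => ?_
  rw [deriv_circleMap]
  have h1 : circleMap 0 τ θ = (τ : ℂ) * Complex.exp (Complex.I * (θ : ℂ)) := by
    rw [circleMap, mul_comm Complex.I (θ : ℂ), zero_add]
  rw [h1, smul_eq_mul]
  ring

lemma integral_box_prod (n : ℕ) (G : Fin n → ℝ → ℂ) :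
    (∫ θ in Set.univ.pi fun _ : Fin n => Set.Ioc (0 : ℝ) (2 * π), ∏ j, G j (θ j))
      = ∏ j, ∫ t in Set.Ioc (0 : ℝ) (2 * π), G j t := by
  rw [← MeasureTheory.integral_indicator (MeasurableSet.univ_pi fun _ => measurableSet_Ioc)]
  have h : (Set.indicator (Set.univ.pi fun _ : Fin n => Set.Ioc (0 : ℝ) (2 * π))
        fun θ => ∏ j, G j (θ j))
      = fun θ => ∏ j, Set.indicator (Set.Ioc (0 : ℝ) (2 * π)) (G j) (θ j) := by
    funext θ
    by_cases hθ : θ ∈ Set.univ.pi fun _ : Fin n => Set.Ioc (0 : ℝ) (2 * π)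
    · rw [Set.indicator_of_mem hθ]
      exact Finset.prod_congr rfl fun j _ =>
        (Set.indicator_of_mem (hθ j trivial) _).symm
    · rw [Set.indicator_of_notMem hθ]
      rw [Set.mem_univ_pi] at hθ
      push_neg at hθ
      obtain ⟨j, hj⟩ := hθ
      exact (Finset.prod_eq_zero (Finset.mem_univ j)
        (Set.indicator_of_notMem hj _)).symm
  rw [h]
  refine (MeasureTheory.integral_fintype_prod_eq_prod (μ := fun _ => volume)
    (fun j => Set.indicator (Set.Ioc (0 : ℝ) (2 * π)) (G j))).trans ?_
  exact Finset.prod_congr rfl fun j _ =>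
    MeasureTheory.integral_indicator measurableSet_Ioc

lemma integrableOn_box {n : ℕ} (G : Fin n → ℝ → ℂ) (hG : ∀ j, Continuous (G j)) :
    IntegrableOn (fun θ : Fin n → ℝ => ∏ j, G j (θ j))
      (Set.univ.pi fun _ : Fin n => Set.Ioc (0 : ℝ) (2 * π)) := by
  have hc : Continuous fun θ : Fin n → ℝ => ∏ j, G j (θ j) :=
    continuous_finset_prod _ fun j _ => (hG j).comp (continuous_apply j)
  have hcomp : IsCompact (Set.univ.pi fun _ : Fin n => Set.Icc (0 : ℝ) (2 * π)) :=
    isCompact_univ_pi fun _ => isCompact_Icc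
  exact (hc.continuousOn.integrableOn_compact hcomp).mono_set
    (Set.pi_mono fun i _ => Set.Ioc_subset_Icc_self)

/-- The single-circle integrand. -/
def Fterm (τ μ : ℝ) (xc : ℂ) (k : ℕ) : ℝ → ℂ := fun t =>
  Complex.I * (τ : ℂ) * Complex.exp (Complex.I * (t : ℂ)) *
    (Complex.exp (xc * ((τ : ℂ) * Complex.exp (Complex.I * (t : ℂ)))
        - (μ : ℂ) / 2 * ((τ : ℂ) * Complex.exp (Complex.I * (t : ℂ))) ^ 2) *
      ((τ : ℂ) * Complex.exp (Complex.I * (t : ℂ))) ^ (-((k : ℕ) + 1) : ℤ))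

lemma continuous_term (τ : ℝ) (hτ : 0 < τ) (xc : ℂ) (μ : ℝ) (k : ℕ) :
    Continuous (Fterm τ μ xc k) := by
  unfold Fterm
  have hζ : Continuous fun t : ℝ => (τ : ℂ) * Complex.exp (Complex.I * (t : ℂ)) := by
    fun_prop
  have hne : ∀ t : ℝ, (τ : ℂ) * Complex.exp (Complex.I * (t : ℂ)) ≠ 0 := fun t =>
    mul_ne_zero (Complex.ofReal_ne_zero.mpr hτ.ne') (Complex.exp_ne_zero _)
  have hz : Continuous fun t : ℝ =>
      ((τ : ℂ) * Complex.exp (Complex.I * (t : ℂ))) ^ (-((k : ℕ) + 1) : ℤ) :=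
    hζ.zpow₀ _ fun t => Or.inl (hne t)
  apply Continuous.mul
  · fun_prop
  · apply Continuous.mul
    · fun_prop
    · exact hz

lemma key_single (τ : ℝ) (hτ : 0 < τ) (μ : ℝ) (xc : ℂ) (k : ℕ) :
    (∫ t in Set.Ioc (0 : ℝ) (2 * π), Fterm τ μ xc k t)
      = 2 * (π : ℂ) * Complex.I * acoef (-((μ : ℂ) / 2)) xc k := by
  unfold Fterm
  have hfun : ∀ t : ℝ,
      Complex.I * (τ : ℂ) * Complex.exp (Complex.I * (t : ℂ)) *
        (Complex.exp (xc * ((τ : ℂ) * Complex.exp (Complex.I * (t : ℂ)))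
            - (μ : ℂ) / 2 * ((τ : ℂ) * Complex.exp (Complex.I * (t : ℂ))) ^ 2) *
          ((τ : ℂ) * Complex.exp (Complex.I * (t : ℂ))) ^ (-((k : ℕ) + 1) : ℤ))
      = Complex.I * (τ : ℂ) * Complex.exp (Complex.I * (t : ℂ)) *
          ((fun z : ℂ => z ^ (-((k : ℕ) + 1) : ℤ) *
            Complex.exp (xc * z + -((μ : ℂ) / 2) * z ^ 2))
            ((τ : ℂ) * Complex.exp (Complex.I * (t : ℂ)))) := by
    intro t
    simp only []
    have : xc * ((τ : ℂ) * Complex.exp (Complex.I * (t : ℂ)))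
        - (μ : ℂ) / 2 * ((τ : ℂ) * Complex.exp (Complex.I * (t : ℂ))) ^ 2
        = xc * ((τ : ℂ) * Complex.exp (Complex.I * (t : ℂ)))
          + -((μ : ℂ) / 2) * ((τ : ℂ) * Complex.exp (Complex.I * (t : ℂ))) ^ 2 := by ring
    rw [this]
    ring
  rw [MeasureTheory.setIntegral_congr_fun measurableSet_Ioc fun t _ => hfun t]
  rw [integral_Ioc_eq_circleIntegral hτ
    (fun z : ℂ => z ^ (-((k : ℕ) + 1) : ℤ) * Complex.exp (xc * z + -((μ : ℂ) / 2) * z ^ 2))]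
  exact circleIntegral_eq (-((μ : ℂ) / 2)) xc hτ k


lemma prod_split {n : ℕ} (A B C : Fin n → ℂ) (s : ℂ) :
    (∏ j, A j) * ((∏ j, B j) * (s * ∏ j, C j)) = s * ∏ j, A j * (B j * C j) := by
  rw [Finset.prod_mul_distrib, Finset.prod_mul_distrib]
  ring

lemma det_acoef_eq (n : ℕ) (c : ℂ) (x : Fin n → ℂ) :
    Matrix.det (Matrix.of fun i j : Fin n => acoef c (x j) (i : ℕ))
      = Matrix.det (Matrix.of fun i j : Fin n =>
          (x j) ^ (i : ℕ) / (Nat.factorial (i : ℕ) : ℂ)) := by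
  classical
  set L : Matrix (Fin n) (Fin n) ℂ :=
    Matrix.of fun i m : Fin n =>
      if (m : ℕ) ≤ (i : ℕ) then gcoef c ((i : ℕ) - (m : ℕ)) else 0 with hLdef
  set V : Matrix (Fin n) (Fin n) ℂ :=
    Matrix.of fun m j : Fin n =>
      (x j) ^ (m : ℕ) / (Nat.factorial (m : ℕ) : ℂ) with hVdef
  have hA : (Matrix.of fun i j : Fin n => acoef c (x j) (i : ℕ)) = L * V := by
    ext i j
    rw [Matrix.mul_apply]
    simp only [hLdef, hVdef, Matrix.of_apply]
    rw [acoef, Finset.Nat.sum_antidiagonal_eq_sum_range_succ_mk]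
    have h1 : (∑ m : Fin n,
        (if (m : ℕ) ≤ (i : ℕ) then gcoef c ((i : ℕ) - (m : ℕ)) else 0) *
          ((x j) ^ (m : ℕ) / (Nat.factorial (m : ℕ) : ℂ)))
        = ∑ m ∈ Finset.range n,
          (if m ≤ (i : ℕ) then gcoef c ((i : ℕ) - m) else 0) *
            ((x j) ^ m / (Nat.factorial m : ℂ)) :=
      Fin.sum_univ_eq_sum_range
        (fun m => (if m ≤ (i : ℕ) then gcoef c ((i : ℕ) - m) else 0) *
          ((x j) ^ m / (Nat.factorial m : ℂ))) n
    rw [h1]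
    rw [← Finset.sum_subset (Finset.range_subset_range.mpr i.isLt)
      (fun m _ hm => by
        rw [if_neg fun hle => hm (Finset.mem_range.mpr (by omega)), zero_mul])]
    refine Finset.sum_congr rfl fun m hm => ?_
    have hmle : m ≤ (i : ℕ) := by
      have := Finset.mem_range.mp hm; omega
    rw [if_pos hmle]
    ring
  have hL : L.BlockTriangular OrderDual.toDual := by
    intro i j hij
    have hij' : i < j := hij
    simp only [hLdef, Matrix.of_apply]
    rw [if_neg (Nat.not_le.mpr hij')]
  have hdetL : L.det = 1 := by
    rw [Matrix.det_of_lowerTriangular L hL]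
    refine Finset.prod_eq_one fun i _ => ?_
    simp [hLdef, gcoef_zero]
  rw [hA, Matrix.det_mul, hdetL, one_mul]

end HermiteContourAux

open HermiteContourAux in
/-- Identity (3.5): for `μ > 0`, `τ > 0` and real `x_1,…,x_n`,
`det(x_j^{i-1}/(i-1)!) = (2πi)^{-n} ∮_{γ_τ}⋯∮_{γ_τ}
  ∏_j e^{x_j ζ_j - μ ζ_j²/2} det(ζ_j^{-i}) dζ_1⋯dζ_n`. -/
theorem hermite_contour_identity (n : ℕ) (hn : 1 ≤ n) (μ τ : ℝ)
    (hμ : 0 < μ) (hτ : 0 < τ) (x : Fin n → ℝ) :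
    (Matrix.det (Matrix.of fun i j : Fin n =>
        ((x j : ℂ)) ^ (i : ℕ) / (Nat.factorial (i : ℕ) : ℂ)) : ℂ) =
      (2 * (π : ℂ) * Complex.I) ^ (-(n : ℤ)) *
        circlesIntegral (fun _ : Fin n => τ) (fun ζ =>
          (∏ j : Fin n,
            Complex.exp ((x j : ℂ) * ζ j - (μ : ℂ) / 2 * ζ j ^ 2)) *
            Matrix.det (Matrix.of fun i j : Fin n => ζ j ^ (-((i : ℕ) + 1) : ℤ))) := by
  classical
  set c : ℂ := -((μ : ℂ) / 2) with hc
  set A : Matrix (Fin n) (Fin n) ℂ :=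
    Matrix.of fun i j : Fin n => acoef c ((x j : ℂ)) (i : ℕ) with hAdef
  have hbox : MeasurableSet (Set.univ.pi fun _ : Fin n => Set.Ioc (0 : ℝ) (2 * π)) :=
    MeasurableSet.univ_pi fun _ => measurableSet_Ioc
  have key : circlesIntegral (fun _ : Fin n => τ) (fun ζ =>
      (∏ j : Fin n,
        Complex.exp ((x j : ℂ) * ζ j - (μ : ℂ) / 2 * ζ j ^ 2)) *
        Matrix.det (Matrix.of fun i j : Fin n => ζ j ^ (-((i : ℕ) + 1) : ℤ)))
      = (2 * (π : ℂ) * Complex.I) ^ n * A.det := by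
    rw [circlesIntegral]
    have hint : ∀ θ : Fin n → ℝ,
        (∏ j : Fin n, Complex.I * (((fun _ : Fin n => τ) j : ℝ) : ℂ) *
            Complex.exp (Complex.I * (θ j : ℂ))) *
          ((∏ j : Fin n, Complex.exp ((x j : ℂ) *
              ((((fun _ : Fin n => τ) j : ℝ) : ℂ) * Complex.exp (Complex.I * (θ j : ℂ)))
              - (μ : ℂ) / 2 * ((((fun _ : Fin n => τ) j : ℝ) : ℂ) *
                Complex.exp (Complex.I * (θ j : ℂ))) ^ 2)) *
            Matrix.det (Matrix.of fun i j : Fin n =>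
              ((((fun _ : Fin n => τ) j : ℝ) : ℂ) *
                Complex.exp (Complex.I * (θ j : ℂ))) ^ (-((i : ℕ) + 1) : ℤ)))
        = ∑ σ : Equiv.Perm (Fin n), ((Equiv.Perm.sign σ : ℤ) : ℂ) *
            ∏ j : Fin n, Fterm τ μ (x j : ℂ) ((σ j : ℕ)) (θ j) := by
      intro θ
      rw [Matrix.det_apply']
      rw [Finset.mul_sum, Finset.mul_sum]
      exact Finset.sum_congr rfl fun σ _ => prod_split _ _ _ _
    rw [MeasureTheory.setIntegral_congr_fun hbox fun θ _ => hint θ]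
    rw [MeasureTheory.integral_finset_sum _ (fun σ _ =>
      ((integrableOn_box (fun j => Fterm τ μ (x j : ℂ) ((σ j : ℕ)))
        (fun j => continuous_term τ hτ (x j : ℂ) μ _)).const_mul _))]
    have h3 : ∀ σ : Equiv.Perm (Fin n),
        (∫ θ in Set.univ.pi fun _ : Fin n => Set.Ioc (0 : ℝ) (2 * π),
            ((Equiv.Perm.sign σ : ℤ) : ℂ) *
              ∏ j : Fin n, Fterm τ μ (x j : ℂ) ((σ j : ℕ)) (θ j))
        = ((Equiv.Perm.sign σ : ℤ) : ℂ) *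
            ((2 * (π : ℂ) * Complex.I) ^ n * ∏ j : Fin n, A (σ j) j) := by
      intro σ
      rw [MeasureTheory.integral_const_mul]
      rw [integral_box_prod n (fun j => Fterm τ μ (x j : ℂ) ((σ j : ℕ)))]
      rw [Finset.prod_congr rfl fun j _ => key_single τ hτ μ (x j : ℂ) ((σ j : ℕ))]
      rw [Finset.prod_mul_distrib, Finset.prod_const, Finset.card_univ, Fintype.card_fin]
      rfl
    rw [Finset.sum_congr rfl fun σ _ => h3 σ, Matrix.det_apply', Finset.mul_sum]
    exact Finset.sum_congr rfl fun σ _ => by ring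
  rw [key, det_acoef_eq n c fun j => (x j : ℂ)]
  rw [zpow_neg, zpow_natCast, ← mul_assoc,
    inv_mul_cancel₀ (pow_ne_zero _ Complex.two_pi_I_ne_zero), one_mul]
end HermiteContourAux
end

section
/- Let n ≥ 1 and let z_1,…,z_n, w_1,…,w_n be complex numbers such that the z_j are pairwise distinct, the w_j are pairwise distinct, z_k ≠ 0 for all k, w_ℓ ≠ 1 for all ℓ, and w_ℓ ≠ z_k for all k, ℓ. Then (−1)^{n−1} ∑_{k=1}^n ∑_{ℓ=1}^n ( (1−z_k) / ( z_k (1−w_ℓ)(w_ℓ−z_k) ) ) · ( ∏_{j=1}^n (w_ℓ−z_j)(w_j−z_k) ) / ( ∏_{j≠ℓ} (w_ℓ−w_j) · ∏_{j≠k} (z_k−z_j) ) = ∏_{j=1}^n ( w_j(1−z_j) ) / ( z_j(1−w_j) ) − ∏_{j=1}^n (1−z_j)/(1−w_j). -/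
open scoped BigOperators

open Finset

open Polynomial

lemma coeff_basis_card {ι : Type*} [DecidableEq ι] {s : Finset ι} {v : ι → ℂ} {i : ι}
    (hi : i ∈ s) :
    (Lagrange.basis s v i).coeff (s.card - 1) = Lagrange.nodalWeight s v i := by
  have hb : Lagrange.basis s v i
      = C (Lagrange.nodalWeight s v i) * Lagrange.nodal (s.erase i) v := by
    rw [Lagrange.basis, Lagrange.nodalWeight, Lagrange.nodal_eq, map_prod, ← prod_mul_distrib]
    rfl
  have h1 : (Lagrange.nodal (s.erase i) v).natDegree = s.card - 1 := by
    rw [Lagrange.natDegree_nodal, card_erase_of_mem hi]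
  rw [hb, coeff_C_mul, ← h1, (Lagrange.nodal_monic).coeff_natDegree, mul_one]

lemma residue_sum {ι : Type*} [DecidableEq ι] (s : Finset ι) (v : ι → ℂ)
    (hvs : Set.InjOn v s) (f : ℂ[X]) (hf : f.degree < s.card) :
    ∑ i ∈ s, f.eval (v i) * Lagrange.nodalWeight s v i = f.coeff (s.card - 1) := by
  conv_rhs => rw [Lagrange.eq_interpolate hvs hf]
  rw [Lagrange.interpolate_apply, finset_sum_coeff]
  exact (sum_congr rfl fun i hi => by rw [coeff_C_mul, coeff_basis_card hi]).symm

/-- General residue identity at nodes `u i` (distinct) plus an extra node `a`: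
for a polynomial `f` with `f.degree < n + 1`,
`f(a) * ∏ (a - u j)⁻¹ + ∑ i f(u i) * (u i - a)⁻¹ ∏_{j≠i} (u i - u j)⁻¹ = f.coeff n`. -/
lemma residue_sum_extra (n : ℕ) (u : Fin n → ℂ) (hu : Function.Injective u)
    (a : ℂ) (ha : ∀ i, u i ≠ a) (f : ℂ[X]) (hf : f.degree < (n : ℕ) + 1) :
    f.eval a * ∏ j : Fin n, (a - u j)⁻¹ +
      ∑ i : Fin n, f.eval (u i) * ((u i - a)⁻¹ * ∏ j ∈ univ.erase i, (u i - u j)⁻¹)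
    = f.coeff n := by
  classical
  set s : Finset ℂ := insert a (univ.image u) with hs
  have hamem : a ∉ univ.image u := by
    simp only [mem_image, mem_univ, true_and, not_exists]
    exact fun i => ha i
  have hcard : s.card = n + 1 := by
    rw [hs, card_insert_of_notMem hamem, card_image_of_injective _ hu, card_univ,
      Fintype.card_fin]
  have hinj : Set.InjOn (id : ℂ → ℂ) s := fun x _ y _ h => h
  have key := residue_sum s id hinj f (by rw [hcard]; exact_mod_cast hf)
  rw [hcard] at key
  simp only [Nat.add_sub_cancel] at key
  rw [← key, hs, sum_insert hamem]
  congr 1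
  · -- term at a
    rw [Lagrange.nodalWeight, erase_insert hamem]
    simp only [id_eq]
    rw [prod_image (fun x _ y _ h => hu h)]
  · rw [sum_image (fun x _ y _ h => hu h)]
    refine sum_congr rfl fun i _ => ?_
    rw [Lagrange.nodalWeight]
    have h1 : s.erase (u i) = insert a ((univ.image u).erase (u i)) :=
      erase_insert_of_ne (fun h => ha i h.symm)
    have h2 : a ∉ (univ.image u).erase (u i) := fun h => hamem (mem_of_mem_erase h)
    have h3 : (univ.image u).erase (u i) = (univ.erase i).image u := by
      rw [image_erase hu]
    simp only [id_eq]
    rw [h1, prod_insert h2, h3, prod_image (fun x _ y _ h => hu h)]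


lemma lemA (n : ℕ) (z w : Fin n → ℂ) (hw : Function.Injective w)
    (hw1 : ∀ l, w l ≠ 1) (k : Fin n) :
    ∑ l : Fin n, (∏ j ∈ univ.erase k, (w l - z j)) *
        ((w l - 1)⁻¹ * ∏ j ∈ univ.erase l, (w l - w j)⁻¹)
      = - ((∏ j ∈ univ.erase k, (1 - z j)) * ∏ j : Fin n, (1 - w j)⁻¹) := by
  have hn : 0 < n := k.pos
  set f : ℂ[X] := Lagrange.nodal (univ.erase k) z with hf
  have hdeg : f.natDegree = n - 1 := by
    rw [hf, Lagrange.natDegree_nodal, card_erase_of_mem (mem_univ k), card_univ,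
      Fintype.card_fin]
  have hdlt : f.degree < (n : ℕ) + 1 := by
    apply lt_of_le_of_lt (Polynomial.degree_le_natDegree)
    rw [hdeg]
    exact_mod_cast Nat.lt_succ_of_le (Nat.sub_le n 1)
  have key := residue_sum_extra n w hw 1 hw1 f hdlt
  have hc : f.coeff n = 0 :=
    Polynomial.coeff_eq_zero_of_natDegree_lt (by omega)
  have hev : ∀ x : ℂ, f.eval x = ∏ j ∈ univ.erase k, (x - z j) := fun x => by
    rw [hf, Lagrange.eval_nodal]
  rw [hc, hev] at key
  simp only [hev] at key
  linear_combination key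

lemma lemB (n : ℕ) (z w : Fin n → ℂ) (_hn : 1 ≤ n) (hz : Function.Injective z)
    (hz0 : ∀ k, z k ≠ 0) :
    ∑ k : Fin n, (∏ j : Fin n, (z k - w j)) *
        ((z k)⁻¹ * ∏ j ∈ univ.erase k, (z k - z j)⁻¹)
      = 1 - (∏ j : Fin n, w j) * (∏ j : Fin n, z j)⁻¹ := by
  set f : ℂ[X] := Lagrange.nodal univ w with hf
  have hdeg : f.natDegree = n := by
    rw [hf, Lagrange.natDegree_nodal, card_univ, Fintype.card_fin]
  have hdlt : f.degree < (n : ℕ) + 1 := by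
    apply lt_of_le_of_lt (Polynomial.degree_le_natDegree)
    exact_mod_cast Nat.lt_succ_of_le (le_of_eq hdeg)
  have key := residue_sum_extra n z hz 0 hz0 f hdlt
  have hc : f.coeff n = 1 := by
    rw [← hdeg]; exact Lagrange.nodal_monic.coeff_natDegree
  have hev : ∀ x : ℂ, f.eval x = ∏ j : Fin n, (x - w j) := fun x => by
    rw [hf, Lagrange.eval_nodal]
  rw [hc, hev] at key
  simp only [hev, sub_zero] at key
  have h0 : f.eval 0 * ∏ j : Fin n, ((0:ℂ) - z j)⁻¹
      = (∏ j : Fin n, w j) * (∏ j : Fin n, z j)⁻¹ := by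
    rw [hev, ← prod_inv_distrib, ← prod_mul_distrib, ← prod_mul_distrib]
    refine prod_congr rfl fun j _ => ?_
    rw [zero_sub, zero_sub, inv_neg, neg_mul_neg]
  rw [hev] at h0
  rw [h0] at key
  linear_combination key

/-- The rational-function identity (5.4) of Johansson's paper: for pairwise distinct
`z_1,…,z_n` and pairwise distinct `w_1,…,w_n` with `z_k ≠ 0`, `w_ℓ ≠ 1`, `w_ℓ ≠ z_k`,
`(-1)^{n-1} ∑_{k,ℓ} (1-z_k)/(z_k(1-w_ℓ)(w_ℓ-z_k)) · ∏_j (w_ℓ-z_j)(w_j-z_k) /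
 (∏_{j≠ℓ}(w_ℓ-w_j) ∏_{j≠k}(z_k-z_j)) = ∏_j w_j(1-z_j)/(z_j(1-w_j)) - ∏_j (1-z_j)/(1-w_j)`. -/
theorem double_sum_residue_identity (n : ℕ) (hn : 1 ≤ n) (z w : Fin n → ℂ)
    (hz : Function.Injective z) (hw : Function.Injective w)
    (hz0 : ∀ k, z k ≠ 0) (hw1 : ∀ l, w l ≠ 1) (hwz : ∀ k l, w l ≠ z k) :
    (-1 : ℂ) ^ (n - 1) *
        ∑ k : Fin n, ∑ l : Fin n,
          (1 - z k) / (z k * (1 - w l) * (w l - z k)) *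
            ((∏ j : Fin n, (w l - z j) * (w j - z k)) /
              ((∏ j ∈ univ.erase l, (w l - w j)) * ∏ j ∈ univ.erase k, (z k - z j))) =
      (∏ j : Fin n, w j * (1 - z j) / (z j * (1 - w j))) -
        ∏ j : Fin n, (1 - z j) / (1 - w j) := by
  classical
  have hwm1 : ∀ l, w l - 1 ≠ 0 := fun l => sub_ne_zero.mpr (hw1 l)
  have h1mw : ∀ l, (1 : ℂ) - w l ≠ 0 := fun l => sub_ne_zero.mpr (fun h => hw1 l h.symm)
  have hwzk : ∀ k l, w l - z k ≠ 0 := fun k l => sub_ne_zero.mpr (hwz k l)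
  have hP : ∀ l : Fin n, (∏ j ∈ univ.erase l, (w l - w j)) ≠ 0 := fun l =>
    prod_ne_zero_iff.mpr fun j hj =>
      sub_ne_zero.mpr fun h => (mem_erase.mp hj).1 (hw h).symm
  have hQ : ∀ k : Fin n, (∏ j ∈ univ.erase k, (z k - z j)) ≠ 0 := fun k =>
    prod_ne_zero_iff.mpr fun j hj =>
      sub_ne_zero.mpr fun h => (mem_erase.mp hj).1 (hz h).symm
  -- pointwise rewriting of each term of the double sum
  have hterm : ∀ k l : Fin n,
      (1 - z k) / (z k * (1 - w l) * (w l - z k)) *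
        ((∏ j : Fin n, (w l - z j) * (w j - z k)) /
          ((∏ j ∈ univ.erase l, (w l - w j)) * ∏ j ∈ univ.erase k, (z k - z j)))
      = (-(1 - z k) * (∏ j : Fin n, (w j - z k)) *
            ((z k)⁻¹ * ∏ j ∈ univ.erase k, (z k - z j)⁻¹)) *
          ((∏ j ∈ univ.erase k, (w l - z j)) *
            ((w l - 1)⁻¹ * ∏ j ∈ univ.erase l, (w l - w j)⁻¹)) := by
    intro k l
    rw [prod_mul_distrib, ← mul_prod_erase univ (fun j => w l - z j) (mem_univ k),
      prod_inv_distrib, prod_inv_distrib]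
    rw [div_eq_mul_inv, div_eq_mul_inv,
      show z k * (1 - w l) * (w l - z k) = -(z k * ((w l - 1) * (w l - z k))) from by ring,
      inv_neg, mul_inv, mul_inv]
    calc (1 - z k) * -((z k)⁻¹ * ((w l - 1)⁻¹ * (w l - z k)⁻¹)) *
          (((w l - z k) * ∏ j ∈ univ.erase k, (w l - z j)) * (∏ j : Fin n, (w j - z k)) *
            ((∏ j ∈ univ.erase l, (w l - w j)) * ∏ j ∈ univ.erase k, (z k - z j))⁻¹)
        = (-(1 - z k) * (∏ j : Fin n, (w j - z k)) *
            ((z k)⁻¹ * (∏ j ∈ univ.erase k, (z k - z j))⁻¹)) *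
          ((∏ j ∈ univ.erase k, (w l - z j)) *
            ((w l - 1)⁻¹ * (∏ j ∈ univ.erase l, (w l - w j))⁻¹)) *
          ((w l - z k) * (w l - z k)⁻¹) := by ring
      _ = _ := by rw [mul_inv_cancel₀ (hwzk k l), mul_one]
  -- inner sum via lemA
  have step1 : ∀ k : Fin n,
      (∑ l : Fin n, (1 - z k) / (z k * (1 - w l) * (w l - z k)) *
        ((∏ j : Fin n, (w l - z j) * (w j - z k)) /
          ((∏ j ∈ univ.erase l, (w l - w j)) * ∏ j ∈ univ.erase k, (z k - z j))))
      = ((-1 : ℂ)^n * (∏ j : Fin n, (1 - z j)) * ∏ j : Fin n, (1 - w j)⁻¹) *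
          ((∏ j : Fin n, (z k - w j)) *
            ((z k)⁻¹ * ∏ j ∈ univ.erase k, (z k - z j)⁻¹)) := by
    intro k
    rw [sum_congr rfl fun l _ => hterm k l, ← mul_sum, lemA n z w hw hw1 k]
    have h1 : (∏ j : Fin n, (w j - z k)) = (-1 : ℂ)^n * ∏ j : Fin n, (z k - w j) := by
      calc (∏ j : Fin n, (w j - z k)) = ∏ j : Fin n, (-1 : ℂ) * (z k - w j) :=
            prod_congr rfl fun j _ => by ring
        _ = (∏ _j : Fin n, (-1 : ℂ)) * ∏ j : Fin n, (z k - w j) := prod_mul_distrib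
        _ = (-1 : ℂ)^n * ∏ j : Fin n, (z k - w j) := by
            rw [prod_const, card_univ, Fintype.card_fin]
    have h2 : (1 - z k) * ∏ j ∈ univ.erase k, (1 - z j) = ∏ j : Fin n, (1 - z j) :=
      mul_prod_erase univ (fun j => 1 - z j) (mem_univ k)
    rw [h1, ← h2]
    ring
  rw [sum_congr rfl fun k _ => step1 k, ← mul_sum, lemB n z w hn hz hz0]
  -- final algebra
  have hsign : (-1 : ℂ)^(n-1) * (-1)^n = -1 := by
    rw [← pow_add]
    have h : n - 1 + n = 2*(n-1) + 1 := by omega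
    rw [h, pow_succ, pow_mul]
    simp
  have hR1 : (∏ j : Fin n, w j * (1 - z j) / (z j * (1 - w j)))
      = (∏ j : Fin n, w j) * (∏ j : Fin n, (1 - z j)) *
          ((∏ j : Fin n, z j)⁻¹ * (∏ j : Fin n, (1 - w j))⁻¹) := by
    rw [← prod_inv_distrib, ← prod_inv_distrib, ← prod_mul_distrib, ← prod_mul_distrib,
      ← prod_mul_distrib]
    exact prod_congr rfl fun j _ => by rw [div_eq_mul_inv, mul_inv]
  have hR2 : (∏ j : Fin n, (1 - z j) / (1 - w j))
      = (∏ j : Fin n, (1 - z j)) * (∏ j : Fin n, (1 - w j))⁻¹ := by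
    rw [prod_div_distrib, div_eq_mul_inv]
  rw [hR1, hR2, prod_inv_distrib]
  linear_combination ((∏ j : Fin n, (1 - z j)) * (∏ j : Fin n, (1 - w j))⁻¹ *
    (1 - (∏ j : Fin n, w j) * (∏ j : Fin n, z j)⁻¹)) * hsign
end

section
/- Let N_1 ≥ 1 and ν_1, λ_1, x, d_1 ∈ ℝ. Set L = N_1 + ν_1 N_1^{2/3} + x N_1^{1/3}, μ_1 = N_1 − ν_1 N_1^{2/3}, ξ_1 = 2N_1 + λ_1 N_1^{1/3}, and define g_1(t) = (L/2)·log( (1 + d_1 N_1^{−1/3})^2 + N_1^{−2/3} t^2 ) + (μ_1/2)·( (1 + d_1 N_1^{−1/3})^2 − N_1^{−2/3} t^2 ) − ξ_1 (1 + d_1 N_1^{−1/3}) for t ∈ ℝ, and Δ_1 = d_1 − ν_1 + (1/2)(d_1^2 − 2ν_1 d_1 − x) N_1^{−1/3} − (1/2) ν_1 d_1^2 N_1^{−2/3}. Assume 1 ≤ d_1 ≤ N_1^{1/3}, 1 ≤ Δ_1 ≤ N_1^{1/3}, and ν_1 ≤ (1/2) N_1^{1/3}. Then g_1(t) − g_1(0)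 ≤ −(Δ_1/20)·t^2 for all t ∈ ℝ. -/
set_option maxHeartbeats 1000000

private lemma key_log_ineq (m D A u : ℝ) (hm : 0 ≤ m) (hD : 0 ≤ D) (hmD : D / 4 ≤ m)
    (hA : A ≤ 4) (hu : 0 ≤ u) :
    m * (Real.log (1 + u) - u) - D * Real.log (1 + u) + D / 20 * A * u ≤ 0 := by
  have h1 : Real.log (1 + u) ≤ u := by
    have := Real.log_le_sub_one_of_pos (by linarith : (0:ℝ) < 1 + u)
    linarith
  have h0 : 0 ≤ Real.log (1 + u) := Real.log_nonneg (by linarith)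
  rcases le_or_gt (u / 5) (Real.log (1 + u)) with h | h
  · nlinarith [mul_nonneg hm (sub_nonneg.2 h1), mul_nonneg hD (sub_nonneg.2 h),
      mul_nonneg hD hu]
  · nlinarith [mul_nonneg hD h0, mul_nonneg hD hu,
      mul_nonneg (sub_nonneg.2 hmD) (sub_nonneg.2 h1)]

/-- Steepest-descent estimate (6.6) of Lemma 6.1. -/
theorem steepest_descent_line_estimate (N₁ ν₁ lam₁ x d₁ L μ₁ ξ₁ Δ₁ : ℝ) (g₁ : ℝ → ℝ)
    (hN₁ : 1 ≤ N₁)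
    (hL : L = N₁ + ν₁ * N₁ ^ ((2 : ℝ) / 3) + x * N₁ ^ ((1 : ℝ) / 3))
    (hμ₁ : μ₁ = N₁ - ν₁ * N₁ ^ ((2 : ℝ) / 3))
    (hξ₁ : ξ₁ = 2 * N₁ + lam₁ * N₁ ^ ((1 : ℝ) / 3))
    (hg₁ : ∀ t : ℝ, g₁ t =
      L / 2 * Real.log ((1 + d₁ * N₁ ^ (-(1 : ℝ) / 3)) ^ 2 + N₁ ^ (-(2 : ℝ) / 3) * t ^ 2) +
        μ₁ / 2 * ((1 + d₁ * N₁ ^ (-(1 : ℝ) / 3)) ^ 2 - N₁ ^ (-(2 : ℝ) / 3) * t ^ 2) -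
        ξ₁ * (1 + d₁ * N₁ ^ (-(1 : ℝ) / 3)))
    (hΔ₁ : Δ₁ = d₁ - ν₁ + 1 / 2 * (d₁ ^ 2 - 2 * ν₁ * d₁ - x) * N₁ ^ (-(1 : ℝ) / 3) -
      1 / 2 * ν₁ * d₁ ^ 2 * N₁ ^ (-(2 : ℝ) / 3))
    (hd₁l : 1 ≤ d₁) (hd₁u : d₁ ≤ N₁ ^ ((1 : ℝ) / 3))
    (hΔ₁l : 1 ≤ Δ₁) (hΔ₁u : Δ₁ ≤ N₁ ^ ((1 : ℝ) / 3))
    (hν₁ : ν₁ ≤ 1 / 2 * N₁ ^ ((1 : ℝ) / 3)) :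
    ∀ t : ℝ, g₁ t - g₁ 0 ≤ -(Δ₁ / 20) * t ^ 2 := by
  have hN0 : (0:ℝ) < N₁ := by linarith
  set p : ℝ := N₁ ^ ((1:ℝ)/3) with hpdef
  have hp0 : 0 < p := Real.rpow_pos_of_pos hN0 _
  have hp1 : 1 ≤ p := Real.one_le_rpow hN₁ (by norm_num)
  have hp3 : p ^ 3 = N₁ := by
    rw [hpdef, ← Real.rpow_natCast (N₁ ^ ((1:ℝ)/3)) 3, ← Real.rpow_mul hN0.le]
    norm_num
  have h23 : N₁ ^ ((2:ℝ)/3) = p ^ 2 := by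
    rw [hpdef, ← Real.rpow_natCast (N₁ ^ ((1:ℝ)/3)) 2, ← Real.rpow_mul hN0.le]
    norm_num
  have hm13 : N₁ ^ (-(1:ℝ)/3) = p⁻¹ := by
    rw [show (-(1:ℝ)/3) = ((1:ℝ)/3) * (-1) by ring, Real.rpow_mul hN0.le, ← hpdef,
      Real.rpow_neg_one]
  have hm23 : N₁ ^ (-(2:ℝ)/3) = (p ^ 2)⁻¹ := by
    rw [show (-(2:ℝ)/3) = ((2:ℝ)/3) * (-1) by ring, Real.rpow_mul hN0.le, h23,
      Real.rpow_neg_one]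
  intro t
  clear_value p
  set a : ℝ := 1 + d₁ * p⁻¹ with hadef
  have ha1 : 1 ≤ a := by
    have : 0 < d₁ * p⁻¹ := mul_pos (by linarith) (inv_pos.2 hp0)
    simp [hadef]; linarith
  have ha2 : a ≤ 2 := by
    have hdp : d₁ * p⁻¹ ≤ 1 := by
      rw [← div_le_one hp0] at hd₁u
      calc d₁ * p⁻¹ = d₁ / p := by ring
        _ ≤ 1 := hd₁u
    simp [hadef]; linarith
  have ha0 : 0 < a := by linarith
  clear_value a
  set u : ℝ := (p ^ 2)⁻¹ * t ^ 2 / a ^ 2 with hudef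
  have hu0 : 0 ≤ u := by positivity
  have hsplit : a ^ 2 + (p ^ 2)⁻¹ * t ^ 2 = a ^ 2 * (1 + u) := by
    field_simp [hudef]; rw [hudef]; field_simp
  have hA2u : a ^ 2 * u = (p ^ 2)⁻¹ * t ^ 2 := by
    field_simp [hudef]; rw [hudef]; field_simp
  have ht2 : t ^ 2 = p ^ 2 * (a ^ 2 * u) := by
    rw [hA2u]; field_simp
  clear_value u
  -- key algebraic identity
  have hkeyid : μ₁ * a ^ 2 - L = 2 * p ^ 2 * Δ₁ := by
    rw [hL, hμ₁, hΔ₁, h23, hm13, hm23, hadef, ← hp3]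
    field_simp
    ring
  -- μ₁ lower bound
  have hμlb : p ^ 3 / 2 ≤ μ₁ := by
    rw [hμ₁, h23, ← hp3]
    nlinarith [sq_nonneg p, mul_le_mul_of_nonneg_right hν₁ (sq_nonneg p)]
  -- rewrite g₁
  rw [hg₁ t, hg₁ 0, hm13, hm23, ← hadef]
  have hlog : Real.log (a ^ 2 + (p ^ 2)⁻¹ * t ^ 2)
      = Real.log (a ^ 2) + Real.log (1 + u) := by
    rw [hsplit, Real.log_mul (by positivity) (by positivity)]
  rw [hlog]
  have hzero : (p ^ 2)⁻¹ * (0:ℝ) ^ 2 = 0 := by ring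
  rw [hzero, add_zero]
  have hμ0 : 0 ≤ μ₁ := by nlinarith [pow_pos hp0 3]
  have hDp : Δ₁ * p ^ 2 ≤ p ^ 3 := by nlinarith [sq_nonneg p]
  have ha2ge : 1 ≤ a ^ 2 := by nlinarith
  have hμa : μ₁ ≤ μ₁ * a ^ 2 := by nlinarith [mul_le_mul_of_nonneg_left ha2ge hμ0]
  have key := key_log_ineq (μ₁ * a ^ 2 / 2) (Δ₁ * p ^ 2) (a ^ 2) u
    (by nlinarith) (by positivity) (by linarith) (by nlinarith) hu0
  have hLval : L = μ₁ * a ^ 2 - 2 * p ^ 2 * Δ₁ := by linarith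
  have hA2u' : (p ^ 2)⁻¹ * t ^ 2 = a ^ 2 * u := hA2u.symm
  rw [hLval, hA2u', ht2]
  linarith [key]
end

section
/- Let N_1 ≥ 1 and ν_1, λ_1, y, d_2 ∈ ℝ. Set K = N_1 + ν_1 N_1^{2/3} + y N_1^{1/3}, μ_1 = N_1 − ν_1 N_1^{2/3}, ξ_1 = 2N_1 + λ_1 N_1^{1/3}, and define h_1(s) = K·log(1 − d_2 N_1^{−1/3}) + (μ_1/2)·(1 − d_2 N_1^{−1/3})^2·cos(2 N_1^{−1/3} s) − ξ_1·(1 − d_2 N_1^{−1/3})·cos(N_1^{−1/3} s) for s ∈ ℝ, and Δ_2 = 2(d_2 + ν_1) + (λ_1 − 2ν_1 d_2) N_1^{−1/3}. Assume 1 ≤ d_2 ≤ (1/2) N_1^{1/3}, Δ_2 ≥ 1, and ν_1 ≤ N_1^{1/3}. Then h_1(s) − h_1(0) ≥ (Δ_2/20)·s^2 for all s with |s| ≤ π N_1^{1/3}. -/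
open scoped Real
set_option maxHeartbeats 800000

/-- Jordan-type lower bound for `sin²`. -/
lemma sin_sq_lower_aux (x : ℝ) (hx : |x| ≤ π / 2) :
    (2 / π) ^ 2 * x ^ 2 ≤ Real.sin x ^ 2 := by
  have hπ : (0 : ℝ) < π := Real.pi_pos
  rcases le_or_gt 0 x with h | h
  · have hx' : x ≤ π / 2 := (le_abs_self x).trans hx
    have h1 := Real.mul_le_sin h hx'
    have h2 : 0 ≤ 2 / π * x := by positivity
    nlinarith
  · have hx' : -x ≤ π / 2 := by
      have := (neg_le_abs x).trans hx; linarith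
    have h1 := Real.mul_le_sin (by linarith : (0:ℝ) ≤ -x) hx'
    have h2 : 0 ≤ 2 / π * (-x) := mul_nonneg (by positivity) (by linarith)
    rw [Real.sin_neg] at h1
    nlinarith

lemma pi_sq_lt_20_aux : π ^ 2 < 20 := by
  nlinarith [Real.pi_lt_d2, Real.pi_pos]

/-- Steepest-descent estimate (6.7) of Lemma 6.1: under the KPZ scaling
`K = N₁ + ν₁N₁^{2/3} + yN₁^{1/3}`, `μ₁ = N₁ - ν₁N₁^{2/3}`, `ξ₁ = 2N₁ + λ₁N₁^{1/3}`,
with `1 ≤ d₂ ≤ N₁^{1/3}/2`, `Δ₂ ≥ 1` and `ν₁ ≤ N₁^{1/3}`, the function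
`h₁(s) = K log(1-d₂N₁^{-1/3}) + (μ₁/2)(1-d₂N₁^{-1/3})² cos(2N₁^{-1/3}s)
 - ξ₁(1-d₂N₁^{-1/3}) cos(N₁^{-1/3}s)` satisfies `h₁(s) - h₁(0) ≥ (Δ₂/20)s²`
for all `|s| ≤ πN₁^{1/3}`. -/
theorem steepest_descent_circle_estimate (N₁ ν₁ lam₁ y d₂ K μ₁ ξ₁ Δ₂ : ℝ) (h₁ : ℝ → ℝ)
    (hN₁ : 1 ≤ N₁)
    (hK : K = N₁ + ν₁ * N₁ ^ ((2 : ℝ) / 3) + y * N₁ ^ ((1 : ℝ) / 3))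
    (hμ₁ : μ₁ = N₁ - ν₁ * N₁ ^ ((2 : ℝ) / 3))
    (hξ₁ : ξ₁ = 2 * N₁ + lam₁ * N₁ ^ ((1 : ℝ) / 3))
    (hh₁ : ∀ s : ℝ, h₁ s =
      K * Real.log (1 - d₂ * N₁ ^ (-(1 : ℝ) / 3)) +
        μ₁ / 2 * (1 - d₂ * N₁ ^ (-(1 : ℝ) / 3)) ^ 2 * Real.cos (2 * N₁ ^ (-(1 : ℝ) / 3) * s) -
        ξ₁ * (1 - d₂ * N₁ ^ (-(1 : ℝ) / 3)) * Real.cos (N₁ ^ (-(1 : ℝ) / 3) * s))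
    (hΔ₂ : Δ₂ = 2 * (d₂ + ν₁) + (lam₁ - 2 * ν₁ * d₂) * N₁ ^ (-(1 : ℝ) / 3))
    (hd₂l : 1 ≤ d₂) (hd₂u : d₂ ≤ 1 / 2 * N₁ ^ ((1 : ℝ) / 3))
    (hΔ₂l : 1 ≤ Δ₂) (hν₁ : ν₁ ≤ N₁ ^ ((1 : ℝ) / 3)) :
    ∀ s : ℝ, |s| ≤ π * N₁ ^ ((1 : ℝ) / 3) → h₁ s - h₁ 0 ≥ Δ₂ / 20 * s ^ 2 := by
  have hπ : (0 : ℝ) < π := Real.pi_pos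
  have hN0 : (0 : ℝ) < N₁ := lt_of_lt_of_le one_pos hN₁
  obtain ⟨n, hn_def⟩ : ∃ n : ℝ, n = N₁ ^ ((1 : ℝ) / 3) := ⟨_, rfl⟩
  have hn1 : 1 ≤ n := by
    rw [hn_def]
    calc (1:ℝ) = 1 ^ ((1:ℝ)/3) := (Real.one_rpow _).symm
      _ ≤ N₁ ^ ((1:ℝ)/3) := Real.rpow_le_rpow zero_le_one hN₁ (by norm_num)
  have hn0 : (0 : ℝ) < n := lt_of_lt_of_le one_pos hn1
  have hn3 : n ^ 3 = N₁ := by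
    rw [hn_def, ← Real.rpow_natCast (N₁ ^ ((1:ℝ)/3)) 3, ← Real.rpow_mul hN0.le]
    norm_num
  have hn2 : N₁ ^ ((2 : ℝ) / 3) = n ^ 2 := by
    rw [hn_def, ← Real.rpow_natCast (N₁ ^ ((1:ℝ)/3)) 2, ← Real.rpow_mul hN0.le]
    norm_num
  have hne : N₁ ^ (-(1 : ℝ) / 3) = n⁻¹ := by
    rw [hn_def, ← Real.rpow_neg_one (N₁ ^ ((1:ℝ)/3)), ← Real.rpow_mul hN0.le]
    norm_num
  have hinv : n * n⁻¹ = 1 := mul_inv_cancel₀ hn0.ne'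
  rw [← hn_def] at hξ₁ hd₂u hν₁
  rw [hne] at hh₁ hΔ₂
  rw [hn2, ← hn3] at hμ₁
  intro s hs
  rw [← hn_def] at hs
  obtain ⟨r, hr_def⟩ : ∃ r : ℝ, r = 1 - d₂ * n⁻¹ := ⟨_, rfl⟩
  obtain ⟨u, hu_def⟩ : ∃ u : ℝ, u = n⁻¹ * s := ⟨_, rfl⟩
  have hΔh : h₁ s - h₁ 0 =
      μ₁ / 2 * r ^ 2 * (Real.cos (2 * u) - 1) - ξ₁ * r * (Real.cos u - 1) := by
    rw [hh₁ s, hh₁ 0]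
    rw [show (2 * n⁻¹ * (0:ℝ)) = 0 by ring, show (n⁻¹ * (0:ℝ)) = 0 by ring, Real.cos_zero,
      show 2 * n⁻¹ * s = 2 * u by rw [hu_def]; ring,
      show n⁻¹ * s = u from hu_def.symm, ← hr_def]
    ring
  obtain ⟨si, hsi_def⟩ : ∃ si : ℝ, si = Real.sin (u / 2) := ⟨_, rfl⟩
  obtain ⟨c, hc_def⟩ : ∃ c : ℝ, c = Real.cos (u / 2) := ⟨_, rfl⟩
  have hpyth : si ^ 2 + c ^ 2 = 1 := by
    rw [hsi_def, hc_def]; exact Real.sin_sq_add_cos_sq (u / 2)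
  have hcosu : Real.cos u = 1 - 2 * si ^ 2 := by
    have h := Real.cos_two_mul (u / 2)
    rw [show 2 * (u / 2) = u by ring] at h
    rw [h, ← hc_def]; nlinarith
  have hsinu : Real.sin u = 2 * si * c := by
    have h := Real.sin_two_mul (u / 2)
    rw [show 2 * (u / 2) = u by ring] at h
    rw [h, ← hc_def, ← hsi_def]
  have hcos2u : Real.cos (2 * u) = 1 - 2 * (2 * si * c) ^ 2 := by
    have h := Real.cos_two_mul u
    have h2 : Real.sin u ^ 2 + Real.cos u ^ 2 = 1 := Real.sin_sq_add_cos_sq u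
    rw [hsinu] at h2
    rw [h]; nlinarith
  have hfact : h₁ s - h₁ 0 = 2 * r * si ^ 2 * (ξ₁ - 2 * μ₁ * r * c ^ 2) := by
    rw [hΔh, hcos2u, hcosu]; ring
  -- bounds on pieces
  have hd2n : d₂ * n⁻¹ ≤ 1 / 2 := by
    have h := mul_le_mul_of_nonneg_right hd₂u (inv_nonneg.2 hn0.le)
    rwa [mul_assoc, hinv, mul_one] at h
  have hr_half : (1 : ℝ) / 2 ≤ r := by rw [hr_def]; linarith
  have hμ₁0 : 0 ≤ μ₁ := by rw [hμ₁]; nlinarith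
  have hc2 : c ^ 2 ≤ 1 := by nlinarith [sq_nonneg si]
  have hbracket : Δ₂ * n ^ 2 ≤ ξ₁ - 2 * μ₁ * r * c ^ 2 := by
    have key : ξ₁ - 2 * μ₁ * r = Δ₂ * n ^ 2 := by
      rw [hξ₁, hμ₁, hΔ₂, ← hn3, hr_def]
      field_simp
      ring
    have hμr : 0 ≤ μ₁ * r := mul_nonneg hμ₁0 (by linarith)
    nlinarith
  have huabs : |u| ≤ π := by
    rw [hu_def, abs_mul, abs_of_nonneg (inv_nonneg.2 hn0.le)]
    calc n⁻¹ * |s| ≤ n⁻¹ * (π * n) :=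
          mul_le_mul_of_nonneg_left hs (inv_nonneg.2 hn0.le)
      _ = π * (n * n⁻¹) := by ring
      _ = π := by rw [hinv, mul_one]
  have hsin : u ^ 2 / π ^ 2 ≤ si ^ 2 := by
    have h := sin_sq_lower_aux (u / 2)
      (by rw [abs_div, abs_two]; linarith [huabs])
    rw [hsi_def]
    calc u ^ 2 / π ^ 2 = (2 / π) ^ 2 * (u / 2) ^ 2 := by
          field_simp
      _ ≤ Real.sin (u / 2) ^ 2 := h
  -- combine
  have hBpos : (0:ℝ) ≤ Δ₂ * n ^ 2 := mul_nonneg (by linarith) (sq_nonneg n)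
  have hsi0 : 0 ≤ si ^ 2 := sq_nonneg si
  have hstep1 : (u ^ 2 / π ^ 2) * (Δ₂ * n ^ 2) ≤ si ^ 2 * (ξ₁ - 2 * μ₁ * r * c ^ 2) :=
    mul_le_mul hsin hbracket hBpos hsi0
  have hprod0 : 0 ≤ si ^ 2 * (ξ₁ - 2 * μ₁ * r * c ^ 2) :=
    le_trans (by positivity) hstep1
  have hstep2 : si ^ 2 * (ξ₁ - 2 * μ₁ * r * c ^ 2) ≤
      2 * r * si ^ 2 * (ξ₁ - 2 * μ₁ * r * c ^ 2) := by
    calc si ^ 2 * (ξ₁ - 2 * μ₁ * r * c ^ 2)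
        = 1 * (si ^ 2 * (ξ₁ - 2 * μ₁ * r * c ^ 2)) := (one_mul _).symm
      _ ≤ (2 * r) * (si ^ 2 * (ξ₁ - 2 * μ₁ * r * c ^ 2)) :=
          mul_le_mul_of_nonneg_right (by linarith) hprod0
      _ = 2 * r * si ^ 2 * (ξ₁ - 2 * μ₁ * r * c ^ 2) := by ring
  have hu2n2 : u ^ 2 * n ^ 2 = s ^ 2 := by
    rw [hu_def]
    field_simp
  have hπ2 : π ^ 2 < 20 := pi_sq_lt_20_aux
  have hfinal : Δ₂ / 20 * s ^ 2 ≤ (u ^ 2 / π ^ 2) * (Δ₂ * n ^ 2) := by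
    have h1 : (u ^ 2 / π ^ 2) * (Δ₂ * n ^ 2) = Δ₂ * s ^ 2 / π ^ 2 := by
      rw [← hu2n2]; field_simp
    rw [h1, div_mul_eq_mul_div, div_le_div_iff₀ (by norm_num) (by positivity)]
    have hΔs : 0 ≤ Δ₂ * s ^ 2 := mul_nonneg (by linarith) (sq_nonneg s)
    calc Δ₂ * s ^ 2 * π ^ 2 ≤ Δ₂ * s ^ 2 * 20 :=
          mul_le_mul_of_nonneg_left (le_of_lt hπ2) hΔs
      _ = Δ₂ * s ^ 2 * 20 := rfl
  rw [ge_iff_le, hfact]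
  linarith
end

section
/- For every real x with 0 ≤ x < 1, log(1−x) ≥ −x − x^2/2 − x^3/(3(1−x)^3). -/
/-- For every real `0 ≤ x < 1`, `log(1-x) ≥ -x - x^2/2 - x^3/(3(1-x)^3)`. -/
theorem log_one_sub_ge_cubic (x : ℝ) (hx0 : 0 ≤ x) (hx1 : x < 1) :
    Real.log (1 - x) ≥ -x - x ^ 2 / 2 - x ^ 3 / (3 * (1 - x) ^ 3) := by
  have hax : |x| < 1 := by rw [abs_of_nonneg hx0]; exact hx1
  have hlog := Real.hasSum_pow_div_log_of_abs_lt_one hax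
  have htail := (hasSum_nat_add_iff' 2).2 hlog
  have hgeo : HasSum (fun n : ℕ => (x ^ 3 / 3) * x ^ n) ((x ^ 3 / 3) * (1 - x)⁻¹) :=
    (hasSum_geometric_of_lt_one hx0 hx1).mul_left _
  have hle : -Real.log (1 - x) - ∑ i ∈ Finset.range 2, x ^ (i + 1) / (i + 1)
      ≤ (x ^ 3 / 3) * (1 - x)⁻¹ := by
    refine hasSum_le (fun n => ?_) htail hgeo
    have hxp : (0:ℝ) ≤ x ^ (n + 2 + 1) := pow_nonneg hx0 _
    have h3 : (3:ℝ) ≤ ((n + 2 : ℕ) : ℝ) + 1 := by push_cast; linarith [Nat.cast_nonneg (α := ℝ) n]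
    calc x ^ (n + 2 + 1) / (((n + 2 : ℕ) : ℝ) + 1) ≤ x ^ (n + 2 + 1) / 3 :=
          div_le_div_of_nonneg_left hxp (by norm_num) h3
      _ = x ^ 3 / 3 * x ^ n := by ring
  have hsum : ∑ i ∈ Finset.range 2, x ^ (i + 1) / ((i : ℝ) + 1) = x + x ^ 2 / 2 := by
    norm_num [Finset.sum_range_succ]
  have h1x : (0:ℝ) < 1 - x := by linarith
  have hstep : x ^ 3 / 3 * (1 - x)⁻¹ ≤ x ^ 3 / (3 * (1 - x) ^ 3) := by
    rw [show x ^ 3 / 3 * (1 - x)⁻¹ = x ^ 3 / (3 * (1 - x)) by field_simp]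
    exact div_le_div_of_nonneg_left (pow_nonneg hx0 3) (by positivity)
      (by nlinarith [sq_nonneg (1 - x)])
  rw [hsum] at hle
  linarith
end

section
/- Let N_1 > 0, d_1 ≥ 0 and ν_1, λ_1, x ∈ ℝ. Set L = N_1 + ν_1 N_1^{2/3} + x N_1^{1/3}, μ_1 = N_1 − ν_1 N_1^{2/3}, ξ_1 = 2N_1 + λ_1 N_1^{1/3}, and assume L ≥ 0. Then L·log(1 + d_1 N_1^{−1/3}) + (μ_1/2)·(1 + d_1 N_1^{−1/3})^2 − ξ_1·(1 + d_1 N_1^{−1/3}) ≤ −(3/2)N_1 − (1/2)ν_1 N_1^{2/3} − λ_1 N_1^{1/3} + (d_1^3/3)·(1 + ν_1 N_1^{−1/3} + x N_1^{−2/3}) − ν_1 d_1^2 − λ_1 d_1 + x·( d_1 − (1/2) d_1^2 N_1^{−1/3} ). -/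
lemma log_cubic_bound {u : ℝ} (hu : 0 ≤ u) :
    Real.log (1 + u) ≤ u - u ^ 2 / 2 + u ^ 3 / 3 := by
  set f : ℝ → ℝ := fun y => y - y ^ 2 / 2 + y ^ 3 / 3 - Real.log (1 + y) with hf
  have hderiv : ∀ v : ℝ, 0 ≤ v → HasDerivAt f (v ^ 3 / (1 + v)) v := by
    intro v hv
    have hv0 : (0 : ℝ) < 1 + v := by linarith
    have h1 : HasDerivAt (fun y : ℝ => Real.log (1 + y)) (1 / (1 + v)) v := by
      have := (Real.hasDerivAt_log hv0.ne').comp v ((hasDerivAt_id v).const_add 1)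
      simpa [one_div, Function.comp_def] using this
    have h2 : HasDerivAt (fun y : ℝ => y - y ^ 2 / 2 + y ^ 3 / 3) (1 - v + v ^ 2) v := by
      have := ((hasDerivAt_id v).sub ((hasDerivAt_pow 2 v).div_const 2)).add
        ((hasDerivAt_pow 3 v).div_const 3)
      refine this.congr_deriv ?_
      norm_num
    have h3 := h2.sub h1
    refine h3.congr_deriv ?_
    field_simp
    ring
  have hmono : MonotoneOn f (Set.Ici (0 : ℝ)) := by
    apply monotoneOn_of_deriv_nonneg (convex_Ici 0)
    · intro v hv
      exact (hderiv v hv).differentiableAt.continuousAt.continuousWithinAt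
    · intro v hv
      rw [interior_Ici] at hv
      exact ((hderiv v (le_of_lt hv)).differentiableAt).differentiableWithinAt
    · intro v hv
      rw [interior_Ici] at hv
      have hv' : 0 < v := hv
      rw [(hderiv v hv'.le).deriv]
      positivity
  have h0 : f 0 ≤ f u := hmono (Set.mem_Ici.mpr le_rfl) (Set.mem_Ici.mpr hu) hu
  simp [hf] at h0
  linarith

/-- The upper bound (6.30) for `g₁(0)`: for `N₁ > 0`, `d₁ ≥ 0` and the KPZ scaling
`L = N₁ + ν₁N₁^{2/3} + xN₁^{1/3} ≥ 0`, `μ₁ = N₁ - ν₁N₁^{2/3}`, `ξ₁ = 2N₁ + λ₁N₁^{1/3}`,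
`L log(1+d₁N₁^{-1/3}) + (μ₁/2)(1+d₁N₁^{-1/3})² - ξ₁(1+d₁N₁^{-1/3})
 ≤ -(3/2)N₁ - (1/2)ν₁N₁^{2/3} - λ₁N₁^{1/3} + (d₁³/3)(1+ν₁N₁^{-1/3}+xN₁^{-2/3})
   - ν₁d₁² - λ₁d₁ + x(d₁ - d₁²N₁^{-1/3}/2)`. -/
theorem g_one_zero_upper_bound (N₁ d₁ ν₁ lam₁ x L μ₁ ξ₁ : ℝ)
    (hN₁ : 0 < N₁) (hd₁ : 0 ≤ d₁)
    (hL : L = N₁ + ν₁ * N₁ ^ ((2 : ℝ) / 3) + x * N₁ ^ ((1 : ℝ) / 3))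
    (hμ₁ : μ₁ = N₁ - ν₁ * N₁ ^ ((2 : ℝ) / 3))
    (hξ₁ : ξ₁ = 2 * N₁ + lam₁ * N₁ ^ ((1 : ℝ) / 3))
    (hLpos : 0 ≤ L) :
    L * Real.log (1 + d₁ * N₁ ^ (-(1 : ℝ) / 3)) +
        μ₁ / 2 * (1 + d₁ * N₁ ^ (-(1 : ℝ) / 3)) ^ 2 -
        ξ₁ * (1 + d₁ * N₁ ^ (-(1 : ℝ) / 3)) ≤
      -(3 / 2) * N₁ - 1 / 2 * ν₁ * N₁ ^ ((2 : ℝ) / 3) - lam₁ * N₁ ^ ((1 : ℝ) / 3) +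
        d₁ ^ 3 / 3 * (1 + ν₁ * N₁ ^ (-(1 : ℝ) / 3) + x * N₁ ^ (-(2 : ℝ) / 3)) -
        ν₁ * d₁ ^ 2 - lam₁ * d₁ + x * (d₁ - 1 / 2 * d₁ ^ 2 * N₁ ^ (-(1 : ℝ) / 3)) := by
  set t : ℝ := N₁ ^ ((1 : ℝ) / 3) with ht
  have htpos : 0 < t := Real.rpow_pos_of_pos hN₁ _
  have ht3 : t ^ 3 = N₁ := by
    rw [ht, ← Real.rpow_natCast (N₁ ^ ((1:ℝ)/3)) 3, ← Real.rpow_mul hN₁.le]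
    norm_num
  have ht2 : N₁ ^ ((2 : ℝ) / 3) = t ^ 2 := by
    rw [ht, ← Real.rpow_natCast (N₁ ^ ((1:ℝ)/3)) 2, ← Real.rpow_mul hN₁.le]
    norm_num
  have htm1 : N₁ ^ (-(1 : ℝ) / 3) = t⁻¹ := by
    rw [neg_div, Real.rpow_neg hN₁.le, ht]
  have htm2 : N₁ ^ (-(2 : ℝ) / 3) = (t ^ 2)⁻¹ := by
    rw [neg_div, Real.rpow_neg hN₁.le, ht2]
  set u : ℝ := d₁ * t⁻¹ with hu
  have hu0 : 0 ≤ u := by positivity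
  have hlog : Real.log (1 + u) ≤ u - u ^ 2 / 2 + u ^ 3 / 3 := log_cubic_bound hu0
  have hLlog : L * Real.log (1 + u) ≤ L * (u - u ^ 2 / 2 + u ^ 3 / 3) :=
    mul_le_mul_of_nonneg_left hlog hLpos
  rw [hL, hμ₁, hξ₁, htm1, htm2, ht2, ← ht3, ← hu]
  rw [hL, ht2, ← ht3] at hLlog
  have key : (t^3 + ν₁ * t^2 + x * t) * (u - u ^ 2 / 2 + u ^ 3 / 3) +
      (t^3 - ν₁ * t^2) / 2 * (1 + d₁ * t⁻¹) ^ 2 -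
      (2 * t^3 + lam₁ * t) * (1 + d₁ * t⁻¹) =
      -(3 / 2) * t^3 - 1 / 2 * ν₁ * t^2 - lam₁ * t +
        d₁ ^ 3 / 3 * (1 + ν₁ * t⁻¹ + x * (t ^ 2)⁻¹) -
        ν₁ * d₁ ^ 2 - lam₁ * d₁ + x * (d₁ - 1 / 2 * d₁ ^ 2 * t⁻¹) := by
    rw [hu]
    field_simp
    ring
  rw [← hu] at key
  linarith [hLlog, key]
end

section
/- Let N_1 > 0, 0 ≤ d_2 < N_1^{1/3} and ν_1, λ_1, y ∈ ℝ. Set K = N_1 + ν_1 N_1^{2/3} + y N_1^{1/3}, μ_1 = N_1 − ν_1 N_1^{2/3}, ξ_1 = 2N_1 + λ_1 N_1^{1/3}, and assume K ≥ 0. Then K·log(1 − d_2 N_1^{−1/3}) + (μ_1/2)·(1 − d_2 N_1^{−1/3})^2 − ξ_1·(1 − d_2 N_1^{−1/3}) ≥ −(3/2)N_1 − (1/2)ν_1 N_1^{2/3} − λ_1 N_1^{1/3} − (d_2^3/3)·(1 + ν_1 N_1^{−1/3} + y N_1^{−2/3})/(1 − d_2 N_1^{−1/3})^3 − ν_1 d_2^2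 + λ_1 d_2 − y·( d_2 + (1/2) d_2^2 N_1^{−1/3} ). -/
lemma aux_hasDeriv (t : ℝ) (ht : t < 1) :
    HasDerivAt (fun x : ℝ => Real.log (1 - x) + (x + x ^ 2 / 2 + x ^ 3 / (3 * (1 - x))))
      (t ^ 3 / (3 * (1 - t) ^ 2)) t := by
  have h1 : (0 : ℝ) < 1 - t := by linarith
  have hlin : HasDerivAt (fun x : ℝ => 1 - x) (-1) t := by
    simpa using (hasDerivAt_id t).const_sub 1
  have hlog : HasDerivAt (fun x : ℝ => Real.log (1 - x)) ((1 - t)⁻¹ * (-1)) t :=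
    (Real.hasDerivAt_log (ne_of_gt h1)).comp t hlin
  have hnum : HasDerivAt (fun x : ℝ => x ^ 3) (3 * t ^ 2) t := by
    simpa using hasDerivAt_pow 3 t
  have hden : HasDerivAt (fun x : ℝ => 3 * (1 - x)) (3 * (-1)) t := hlin.const_mul 3
  have hdiv := hnum.div hden (mul_pos (by norm_num) h1).ne'
  have hsq : HasDerivAt (fun x : ℝ => x ^ 2 / 2) (2 * t / 2) t := by
    simpa using (hasDerivAt_pow 2 t).div_const 2
  have := hlog.add (((hasDerivAt_id t).add hsq).add hdiv)
  refine this.congr_deriv ?_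
  field_simp
  ring

lemma aux_log_lb (x : ℝ) (h0 : 0 ≤ x) (h1 : x < 1) :
    Real.log (1 - x) ≥ -x - x ^ 2 / 2 - x ^ 3 / (3 * (1 - x)) := by
  set f : ℝ → ℝ := fun x => Real.log (1 - x) + (x + x ^ 2 / 2 + x ^ 3 / (3 * (1 - x))) with hf
  have hmono : MonotoneOn f (Set.Icc 0 x) := by
    apply monotoneOn_of_deriv_nonneg (convex_Icc 0 x)
    · intro s hs
      exact (aux_hasDeriv s (lt_of_le_of_lt hs.2 h1)).continuousAt.continuousWithinAt
    · intro s hs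
      have hs' : s ∈ Set.Icc 0 x := interior_subset hs
      exact (aux_hasDeriv s (lt_of_le_of_lt hs'.2 h1)).differentiableAt.differentiableWithinAt
    · intro s hs
      have hs' : s ∈ Set.Icc 0 x := interior_subset hs
      rw [(aux_hasDeriv s (lt_of_le_of_lt hs'.2 h1)).deriv]
      have h2 : (0:ℝ) < 1 - s := by linarith [hs'.2, h1]
      exact div_nonneg (pow_nonneg hs'.1 3) (by positivity)
  have h := hmono (Set.left_mem_Icc.mpr h0) (Set.right_mem_Icc.mpr h0) h0
  have hf0 : f 0 = 0 := by simp [hf]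
  rw [hf0] at h
  simp only [hf] at h
  linarith

/-- The lower bound (6.31) for `h₁(0)`: for `N₁ > 0`, `0 ≤ d₂ < N₁^{1/3}` and the KPZ
scaling `K = N₁ + ν₁N₁^{2/3} + yN₁^{1/3} ≥ 0`, `μ₁ = N₁ - ν₁N₁^{2/3}`,
`ξ₁ = 2N₁ + λ₁N₁^{1/3}`,
`K log(1-d₂N₁^{-1/3}) + (μ₁/2)(1-d₂N₁^{-1/3})² - ξ₁(1-d₂N₁^{-1/3})
 ≥ -(3/2)N₁ - (1/2)ν₁N₁^{2/3} - λ₁N₁^{1/3}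
   - (d₂³/3)(1+ν₁N₁^{-1/3}+yN₁^{-2/3})/(1-d₂N₁^{-1/3})³ - ν₁d₂² + λ₁d₂
   - y(d₂ + d₂²N₁^{-1/3}/2)`. -/
theorem h_one_zero_lower_bound (N₁ d₂ ν₁ lam₁ y K μ₁ ξ₁ : ℝ)
    (hN₁ : 0 < N₁) (hd₂0 : 0 ≤ d₂) (hd₂1 : d₂ < N₁ ^ ((1 : ℝ) / 3))
    (hK : K = N₁ + ν₁ * N₁ ^ ((2 : ℝ) / 3) + y * N₁ ^ ((1 : ℝ) / 3))
    (hμ₁ : μ₁ = N₁ - ν₁ * N₁ ^ ((2 : ℝ) / 3))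
    (hξ₁ : ξ₁ = 2 * N₁ + lam₁ * N₁ ^ ((1 : ℝ) / 3))
    (hKpos : 0 ≤ K) :
    K * Real.log (1 - d₂ * N₁ ^ (-(1 : ℝ) / 3)) +
        μ₁ / 2 * (1 - d₂ * N₁ ^ (-(1 : ℝ) / 3)) ^ 2 -
        ξ₁ * (1 - d₂ * N₁ ^ (-(1 : ℝ) / 3)) ≥
      -(3 / 2) * N₁ - 1 / 2 * ν₁ * N₁ ^ ((2 : ℝ) / 3) - lam₁ * N₁ ^ ((1 : ℝ) / 3) -
        d₂ ^ 3 / 3 * ((1 + ν₁ * N₁ ^ (-(1 : ℝ) / 3) + y * N₁ ^ (-(2 : ℝ) / 3)) /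
          (1 - d₂ * N₁ ^ (-(1 : ℝ) / 3)) ^ 3) -
        ν₁ * d₂ ^ 2 + lam₁ * d₂ - y * (d₂ + 1 / 2 * d₂ ^ 2 * N₁ ^ (-(1 : ℝ) / 3)) := by
  set t : ℝ := N₁ ^ ((1 : ℝ) / 3) with htdef
  have ht : 0 < t := Real.rpow_pos_of_pos hN₁ _
  have ht' : t ≠ 0 := ht.ne'
  have h3 : t ^ 3 = N₁ := by
    rw [htdef, ← Real.rpow_natCast (N₁ ^ ((1:ℝ)/3)) 3, ← Real.rpow_mul hN₁.le]
    norm_num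
  have h2 : N₁ ^ ((2 : ℝ) / 3) = t ^ 2 := by
    rw [htdef, ← Real.rpow_natCast (N₁ ^ ((1:ℝ)/3)) 2, ← Real.rpow_mul hN₁.le]
    norm_num
  have hm1 : N₁ ^ (-(1 : ℝ) / 3) = t⁻¹ := by
    rw [htdef, ← Real.rpow_neg hN₁.le]
    norm_num
  have hm2 : N₁ ^ (-(2 : ℝ) / 3) = (t ^ 2)⁻¹ := by
    rw [← h2, ← Real.rpow_neg hN₁.le]
    norm_num
  rw [h2, ← h3] at hK
  rw [h2, ← h3] at hμ₁
  rw [← h3] at hξ₁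
  rw [hm1, hm2, h2, ← h3]
  set x : ℝ := d₂ * t⁻¹ with hxdef
  have hx0 : 0 ≤ x := by positivity
  have hx1 : x < 1 := by
    rw [hxdef, mul_inv_lt_iff₀ ht, one_mul]; exact hd₂1
  have h1x : (0:ℝ) < 1 - x := by linarith
  have hlog := aux_log_lb x hx0 hx1
  have hKlog : K * Real.log (1 - x) ≥ K * (-x - x ^ 2 / 2 - x ^ 3 / (3 * (1 - x))) :=
    mul_le_mul_of_nonneg_left hlog hKpos
  have hcube : (1 - x) ^ 3 ≤ 1 - x := by nlinarith [sq_nonneg x, sq_nonneg (1-x)]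
  have hKx3 : K * x ^ 3 = d₂ ^ 3 * (1 + ν₁ * t⁻¹ + y * (t ^ 2)⁻¹) := by
    rw [hK, hxdef]
    field_simp
  have hstep : K * (x ^ 3 / (3 * (1 - x))) ≤ K * x ^ 3 / 3 / (1 - x) ^ 3 := by
    have he : K * (x ^ 3 / (3 * (1 - x))) = K * x ^ 3 / 3 / (1 - x) := by
      field_simp
    rw [he]
    exact div_le_div_of_nonneg_left
      (div_nonneg (mul_nonneg hKpos (pow_nonneg hx0 3)) (by norm_num))
      (by positivity) hcube
  have hpoly : K * (-x - x ^ 2 / 2) + μ₁ / 2 * (1 - x) ^ 2 - ξ₁ * (1 - x) =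
      -(3 / 2) * t ^ 3 - 1 / 2 * ν₁ * t ^ 2 - lam₁ * t - ν₁ * d₂ ^ 2 + lam₁ * d₂ -
        y * (d₂ + 1 / 2 * d₂ ^ 2 * t⁻¹) := by
    rw [hK, hμ₁, hξ₁, hxdef]
    field_simp
    ring
  have hrhs : d₂ ^ 3 / 3 * ((1 + ν₁ * t⁻¹ + y * (t ^ 2)⁻¹) / (1 - x) ^ 3) =
      K * x ^ 3 / 3 / (1 - x) ^ 3 := by
    rw [hKx3]; ring
  calc K * Real.log (1 - x) + μ₁ / 2 * (1 - x) ^ 2 - ξ₁ * (1 - x)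
      ≥ K * (-x - x ^ 2 / 2 - x ^ 3 / (3 * (1 - x))) + μ₁ / 2 * (1 - x) ^ 2 - ξ₁ * (1 - x) := by
        linarith
    _ = K * (-x - x ^ 2 / 2) - K * (x ^ 3 / (3 * (1 - x))) + μ₁ / 2 * (1 - x) ^ 2 - ξ₁ * (1 - x) := by
        ring
    _ ≥ K * (-x - x ^ 2 / 2) - K * x ^ 3 / 3 / (1 - x) ^ 3 + μ₁ / 2 * (1 - x) ^ 2 - ξ₁ * (1 - x) := by
        linarith
    _ = _ := by rw [hrhs]; linarith [hpoly]
end
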